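/- arXiv:0808.1742 — 5 statements merged into one kernel-verified Lean document; each statement's English description precedes it below -/
import Mathlib

section
/- Let Λ ⊂ ℤ² be a finite set with the closure property: whenever (n₁,n₂,n₃) ∈ Γ_res(n) and n₁, n₂, n₃ ∈ Λ, then n ∈ Λ. Let T > 0 and let r : [0,T] → ℓ¹(ℤ²; ℂ) be a continuously differentiable solution of the resonant system RFNLS such that r_n(0) = 0 for all n ∉ Λ. Then r_n(t) = 0 for all n ∉ Λ and all t ∈ [0,T]. -/
open scoped BigOperators ENNReal

noncomputable section

/-- The squared Euclidean length of a lattice point `n ∈ ℤ²`. -/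
def nsq (n : ℤ × ℤ) : ℤ := n.1 ^ 2 + n.2 ^ 2

/-- The set `Γ(n)` of non-self interactions at frequency `n`. -/
def Gam (n : ℤ × ℤ) : Set ((ℤ × ℤ) × (ℤ × ℤ) × (ℤ × ℤ)) :=
  {p | p.1 - p.2.1 + p.2.2 = n ∧ p.1 ≠ n ∧ p.2.2 ≠ n}

/-- `ω₄ = |n₁|² − |n₂|² + |n₃|² − |n|²`. -/
def omega4 (n : ℤ × ℤ) (p : (ℤ × ℤ) × (ℤ × ℤ) × (ℤ × ℤ)) : ℤ :=
  nsq p.1 - nsq p.2.1 + nsq p.2.2 - nsq n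

/-- The set `Γ_res(n)` of resonant non-self interactions at frequency `n`. -/
def GamRes (n : ℤ × ℤ) : Set ((ℤ × ℤ) × (ℤ × ℤ) × (ℤ × ℤ)) :=
  {p | p ∈ Gam n ∧ omega4 n p = 0}

/-- The right-hand side of the resonant system `RFNLS` (after multiplying by `i`
it is the derivative): `−r_n |r_n|² + Σ_{Γ_res(n)} r_{n₁} conj(r_{n₂}) r_{n₃}`. -/
def resRHS (r : (ℤ × ℤ) → ℂ) (n : ℤ × ℤ) : ℂ :=
  -(r n * ((‖r n‖ : ℝ) : ℂ) ^ 2) +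
    ∑' p : GamRes n, r (↑p : (ℤ × ℤ) × (ℤ × ℤ) × (ℤ × ℤ)).1 *
      (starRingEnd ℂ) (r (↑p : (ℤ × ℤ) × (ℤ × ℤ) × (ℤ × ℤ)).2.1) *
      r (↑p : (ℤ × ℤ) × (ℤ × ℤ) × (ℤ × ℤ)).2.2

/-- `r` is a continuously differentiable solution of `RFNLS`,
`−i ∂ₜ r_n = −r_n|r_n|² + Σ_{Γ_res(n)} r_{n₁} conj(r_{n₂}) r_{n₃}`, on the set `S`. -/
def IsRFNLSSolOn (S : Set ℝ) (r : ℝ → lp (fun _ : ℤ × ℤ => ℂ) 1) : Prop :=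
  ∃ r' : ℝ → lp (fun _ : ℤ × ℤ => ℂ) 1,
    ContinuousOn r' S ∧
    (∀ t ∈ S, HasDerivWithinAt r (r' t) S t) ∧
    (∀ t ∈ S, ∀ n : ℤ × ℤ, -Complex.I * (r' t) n = resRHS (⇑(r t)) n)

open scoped NNReal

abbrev L1 := lp (fun _ : ℤ × ℤ => ℂ) 1

lemma summable_norm_lp (x : L1) : Summable fun n => ‖x n‖ := by
  have := (lp.memℓp x).summable (p := 1) (by norm_num)
  simpa [Real.rpow_one] using this

example (x : L1) : ‖x‖ = ∑' n, ‖x n‖ := by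
  simpa [Real.rpow_one] using lp.norm_eq_tsum_rpow (p := 1) (by norm_num) x

def projF (Λ : Finset (ℤ × ℤ)) (x : (ℤ × ℤ) → ℂ) : (ℤ × ℤ) → ℂ :=
  fun n => if n ∈ Λ then 0 else x n

lemma memℓp_projF (Λ : Finset (ℤ × ℤ)) (x : L1) : Memℓp (projF Λ x) 1 := by
  apply memℓp_gen
  simp only [ENNReal.toReal_one, Real.rpow_one]
  refine Summable.of_nonneg_of_le (fun n => norm_nonneg _) (fun n => ?_) (summable_norm_lp x)
  by_cases h : n ∈ Λ <;> simp [projF, h]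

def PcL (Λ : Finset (ℤ × ℤ)) : L1 →ₗ[ℝ] L1 where
  toFun x := ⟨projF Λ x, memℓp_projF Λ x⟩
  map_add' x y := by
    ext n
    show projF Λ (x + y) n = projF Λ x n + projF Λ y n
    by_cases h : n ∈ Λ <;> simp [projF, h]
  map_smul' c x := by
    ext n
    by_cases h : n ∈ Λ <;> simp [projF, h]

example (Λ : Finset (ℤ × ℤ)) (x : L1) (n : ℤ × ℤ) : (PcL Λ x) n = if n ∈ Λ then 0 else x n := rfl

lemma PcL_norm_le (Λ : Finset (ℤ × ℤ)) (x : L1) : ‖PcL Λ x‖ ≤ 1 * ‖x‖ := by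
  rw [one_mul]
  have h1 : ‖PcL Λ x‖ = ∑' n, ‖(PcL Λ x) n‖ := by
    simpa [Real.rpow_one] using lp.norm_eq_tsum_rpow (p := 1) (by norm_num) (PcL Λ x)
  have h2 : ‖x‖ = ∑' n, ‖x n‖ := by
    simpa [Real.rpow_one] using lp.norm_eq_tsum_rpow (p := 1) (by norm_num) x
  rw [h1, h2]
  refine Summable.tsum_le_tsum (fun n => ?_) (summable_norm_lp _) (summable_norm_lp x)
  show ‖if n ∈ Λ then 0 else x n‖ ≤ ‖x n‖
  by_cases h : n ∈ Λ <;> simp [h]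

def Pc (Λ : Finset (ℤ × ℤ)) : L1 →L[ℝ] L1 := LinearMap.mkContinuous (PcL Λ) 1 (PcL_norm_le Λ)

lemma Pc_apply (Λ : Finset (ℤ × ℤ)) (x : L1) (n : ℤ × ℤ) :
    (Pc Λ x) n = if n ∈ Λ then 0 else x n := rfl

lemma nn_tsum_le {ι : Type*} [Countable ι] (f : ι → ℂ) :
    (‖∑' i, f i‖₊ : ℝ≥0∞) ≤ ∑' i, (‖f i‖₊ : ℝ≥0∞) := by
  by_cases h : ∑' i, (‖f i‖₊ : ℝ≥0∞) = ⊤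
  · simp [h]
  · have hs : Summable fun i => ‖f i‖₊ := ENNReal.tsum_coe_ne_top_iff_summable.mp h
    have hf : Summable f := by
      apply Summable.of_nnnorm hs
    rw [← ENNReal.coe_tsum hs]
    exact_mod_cast nnnorm_tsum_le hs

lemma enorm_lp_eq (x : L1) : (‖x‖₊ : ℝ≥0∞) = ∑' n, (‖x n‖₊ : ℝ≥0∞) := by
  have hs : Summable fun n => ‖x n‖₊ := by
    rw [← NNReal.summable_coe]; exact summable_norm_lp x
  rw [← ENNReal.coe_tsum hs]
  norm_cast
  apply NNReal.coe_injective
  rw [NNReal.coe_tsum]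
  simpa [Real.rpow_one] using lp.norm_eq_tsum_rpow (p := 1) (by norm_num) x

lemma triple_tsum (f g h : (ℤ × ℤ) → ℝ≥0∞) :
    ∑' p : (ℤ × ℤ) × (ℤ × ℤ) × (ℤ × ℤ), f p.1 * g p.2.1 * h p.2.2
      = (∑' m, f m) * (∑' m, g m) * (∑' m, h m) := by
  rw [ENNReal.tsum_prod']
  have inner : ∀ a, (∑' q : (ℤ × ℤ) × (ℤ × ℤ), f a * g q.1 * h q.2)
      = f a * ((∑' m, g m) * (∑' m, h m)) := by
    intro a
    rw [ENNReal.tsum_prod']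
    simp only [mul_assoc, ENNReal.tsum_mul_left, ENNReal.tsum_mul_right]
  simp only [inner]
  rw [ENNReal.tsum_mul_right, ← mul_assoc]

lemma key (Λ : Finset (ℤ × ℤ))
    (hclosed : ∀ (n n₁ n₂ n₃ : ℤ × ℤ), (n₁, n₂, n₃) ∈ GamRes n →
      n₁ ∈ Λ → n₂ ∈ Λ → n₃ ∈ Λ → n ∈ Λ)
    (x : L1) :
    ∑' n : {n : ℤ × ℤ // n ∉ Λ}, (‖resRHS (⇑x) n.1‖₊ : ℝ≥0∞)
      ≤ 4 * (‖x‖₊ : ℝ≥0∞) ^ 2 * (‖Pc Λ x‖₊ : ℝ≥0∞) := by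
  set e : (ℤ × ℤ) → ℝ≥0∞ := fun m => (‖x m‖₊ : ℝ≥0∞) with he
  set u : (ℤ × ℤ) → ℝ≥0∞ := fun m => if m ∈ Λ then 0 else e m with hu
  set E : ℝ≥0∞ := (‖x‖₊ : ℝ≥0∞) with hEdef
  set U : ℝ≥0∞ := (‖Pc Λ x‖₊ : ℝ≥0∞) with hUdef
  set G : (ℤ × ℤ) × (ℤ × ℤ) × (ℤ × ℤ) → ℝ≥0∞ := fun p =>
    u p.1 * e p.2.1 * e p.2.2 + e p.1 * u p.2.1 * e p.2.2 + e p.1 * e p.2.1 * u p.2.2 with hG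
  have hE : E = ∑' m, e m := enorm_lp_eq x
  have hU : U = ∑' m, u m := by
    rw [hUdef, enorm_lp_eq (Pc Λ x)]
    congr 1; ext m
    rw [Pc_apply]
    by_cases h : m ∈ Λ <;> simp [hu, h, he]
  have heE : ∀ m, e m ≤ E := by
    intro m
    simp only [he, hEdef]
    exact_mod_cast lp.norm_apply_le_norm one_ne_zero x m
  -- pointwise bound
  have step1 : ∀ n : ℤ × ℤ, n ∉ Λ →
      (‖resRHS (⇑x) n‖₊ : ℝ≥0∞) ≤ E ^ 2 * u n + ∑' p : GamRes n, G ↑p := by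
    intro n hn
    set A : ℂ := -(x n * ((‖x n‖ : ℝ) : ℂ) ^ 2) with hA
    set B : ℂ := ∑' p : GamRes n, x (↑p : (ℤ × ℤ) × (ℤ × ℤ) × (ℤ × ℤ)).1 *
      (starRingEnd ℂ) (x (↑p : (ℤ × ℤ) × (ℤ × ℤ) × (ℤ × ℤ)).2.1) *
      x (↑p : (ℤ × ℤ) × (ℤ × ℤ) × (ℤ × ℤ)).2.2 with hB
    have hres : resRHS (⇑x) n = A + B := rfl
    rw [hres]
    have hsplit : (‖A + B‖₊ : ℝ≥0∞) ≤ (‖A‖₊ : ℝ≥0∞) + (‖B‖₊ : ℝ≥0∞) := by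
      exact_mod_cast nnnorm_add_le A B
    refine le_trans hsplit (add_le_add ?_ ?_)
    · have h1 : (‖A‖₊ : ℝ≥0∞) = e n * e n * e n := by
        rw [hA]
        have habs : ‖(‖x n‖ : ℝ)‖₊ = ‖x n‖₊ := by
          apply NNReal.coe_injective
          simp
        push_cast [nnnorm_neg, nnnorm_mul, nnnorm_pow, Complex.nnnorm_real, habs]
        simp only [he]
        ring
      rw [h1]
      have : u n = e n := by simp [hu, hn]
      rw [pow_two, this]
      exact mul_le_mul' (mul_le_mul' (heE n) (heE n)) le_rfl
    · rw [hB]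
      refine le_trans (nn_tsum_le _) (ENNReal.tsum_le_tsum fun p => ?_)
      have hmem := p.2
      have h2 : (‖x (↑p : (ℤ × ℤ) × (ℤ × ℤ) × (ℤ × ℤ)).1 *
          (starRingEnd ℂ) (x (↑p : (ℤ × ℤ) × (ℤ × ℤ) × (ℤ × ℤ)).2.1) *
          x (↑p : (ℤ × ℤ) × (ℤ × ℤ) × (ℤ × ℤ)).2.2‖₊ : ℝ≥0∞)
          = e (↑p : (ℤ × ℤ) × (ℤ × ℤ) × (ℤ × ℤ)).1 * e (↑p : (ℤ × ℤ) × (ℤ × ℤ) × (ℤ × ℤ)).2.1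
            * e (↑p : (ℤ × ℤ) × (ℤ × ℤ) × (ℤ × ℤ)).2.2 := by
        push_cast [nnnorm_mul]
        simp [he]
      rw [h2]
      obtain ⟨q, hq⟩ := p
      obtain ⟨n₁, n₂, n₃⟩ := q
      have hnot : n₁ ∉ Λ ∨ n₂ ∉ Λ ∨ n₃ ∉ Λ := by
        by_contra hcon
        push_neg at hcon
        exact hn (hclosed n n₁ n₂ n₃ hq hcon.1 hcon.2.1 hcon.2.2)
      rcases hnot with h | h | h
      · have : u n₁ = e n₁ := by simp [hu, h]
        calc e n₁ * e n₂ * e n₃ = u n₁ * e n₂ * e n₃ := by rw [this]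
          _ ≤ G (n₁, n₂, n₃) := le_add_of_le_of_nonneg (le_add_of_le_of_nonneg le_rfl zero_le) zero_le
      · have : u n₂ = e n₂ := by simp [hu, h]
        calc e n₁ * e n₂ * e n₃ = e n₁ * u n₂ * e n₃ := by rw [this]
          _ ≤ G (n₁, n₂, n₃) := by
            refine le_add_of_le_of_nonneg ?_ zero_le
            exact le_add_of_nonneg_of_le zero_le le_rfl
      · have : u n₃ = e n₃ := by simp [hu, h]
        calc e n₁ * e n₂ * e n₃ = e n₁ * e n₂ * u n₃ := by rw [this]
          _ ≤ G (n₁, n₂, n₃) := le_add_of_nonneg_of_le zero_le le_rfl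
  have hfirst : (∑' n : {n : ℤ × ℤ // n ∉ Λ}, E ^ 2 * u n.1) = E ^ 2 * U := by
    rw [ENNReal.tsum_mul_left]
    congr 1
    rw [hU]
    refine Eq.trans (tsum_subtype {n : ℤ × ℤ | n ∉ Λ} u) ?_
    congr 1; ext m
    by_cases h : m ∈ Λ <;> simp [Set.indicator, hu, h]
  have h3 : (∑' n : {n : ℤ × ℤ // n ∉ Λ}, ∑' p : GamRes n.1, G ↑p)
      ≤ ∑' p : (ℤ × ℤ) × (ℤ × ℤ) × (ℤ × ℤ), G p := by
    have hrw : ∀ n : {n : ℤ × ℤ // n ∉ Λ}, (∑' p : GamRes n.1, G ↑p)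
        = ∑' p, (GamRes n.1).indicator G p := fun n => tsum_subtype _ _
    simp only [hrw]
    rw [ENNReal.tsum_comm]
    refine ENNReal.tsum_le_tsum fun p => ?_
    by_cases hc : p.1 - p.2.1 + p.2.2 ∉ Λ
    · rw [tsum_eq_single (⟨p.1 - p.2.1 + p.2.2, hc⟩ : {n : ℤ × ℤ // n ∉ Λ})]
      · exact Set.indicator_apply_le fun _ => le_rfl
      · intro b hb
        by_cases hp : p ∈ GamRes b.1
        · exact absurd (Subtype.ext hp.1.1.symm) hb
        · exact Set.indicator_of_notMem hp G
    · push_neg at hc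
      have : ∀ n : {n : ℤ × ℤ // n ∉ Λ}, (GamRes n.1).indicator G p = 0 := by
        intro n
        refine Set.indicator_of_notMem (fun hp => ?_) G
        exact n.2 (hp.1.1 ▸ hc)
      simp only [this, tsum_zero]
      exact zero_le
  have hGsum : (∑' p : (ℤ × ℤ) × (ℤ × ℤ) × (ℤ × ℤ), G p) = 3 * (E ^ 2 * U) := by
    simp only [hG]
    rw [ENNReal.tsum_add, ENNReal.tsum_add, triple_tsum, triple_tsum, triple_tsum, hE, hU]
    ring
  calc ∑' n : {n : ℤ × ℤ // n ∉ Λ}, (‖resRHS (⇑x) n.1‖₊ : ℝ≥0∞)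
      ≤ ∑' n : {n : ℤ × ℤ // n ∉ Λ}, (E ^ 2 * u n.1 + ∑' p : GamRes n.1, G ↑p) :=
        ENNReal.tsum_le_tsum fun n => step1 n.1 n.2
    _ = (∑' n : {n : ℤ × ℤ // n ∉ Λ}, E ^ 2 * u n.1)
        + ∑' n : {n : ℤ × ℤ // n ∉ Λ}, ∑' p : GamRes n.1, G ↑p := ENNReal.tsum_add
    _ ≤ E ^ 2 * U + 3 * (E ^ 2 * U) := add_le_add hfirst.le (h3.trans hGsum.le)
    _ = 4 * E ^ 2 * U := by ring

/-- If `Λ` is closed under resonant interactions and the initial data of a solution of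
`RFNLS` is supported in `Λ`, then the solution stays supported in `Λ` for all time. -/
theorem stmt3 (Λ : Finset (ℤ × ℤ))
    (hclosed : ∀ (n n₁ n₂ n₃ : ℤ × ℤ), (n₁, n₂, n₃) ∈ GamRes n →
      n₁ ∈ Λ → n₂ ∈ Λ → n₃ ∈ Λ → n ∈ Λ)
    (T : ℝ) (hT : 0 < T)
    (r : ℝ → lp (fun _ : ℤ × ℤ => ℂ) 1)
    (hsol : IsRFNLSSolOn (Set.Icc 0 T) r)
    (h0 : ∀ n : ℤ × ℤ, n ∉ Λ → (r 0) n = 0) :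
    ∀ t ∈ Set.Icc (0:ℝ) T, ∀ n : ℤ × ℤ, n ∉ Λ → (r t) n = 0 := by
  obtain ⟨r', hc', hder, heq⟩ := hsol
  have hrc : ContinuousOn r (Set.Icc 0 T) := fun t ht => (hder t ht).continuousWithinAt
  obtain ⟨C, hC⟩ := (isCompact_Icc : IsCompact (Set.Icc (0:ℝ) T)).exists_bound_of_continuousOn hrc
  set Cn : ℝ≥0 := C.toNNReal with hCn
  have hCb : ∀ t ∈ Set.Icc (0:ℝ) T, ‖r t‖₊ ≤ Cn := by
    intro t ht
    rw [hCn, ← norm_toNNReal]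
    exact Real.toNNReal_mono (hC t ht)
  set K : ℝ := 4 * (Cn : ℝ) ^ 2 with hK
  set g : ℝ → L1 := fun t => Pc Λ (r t) with hg
  set g' : ℝ → L1 := fun t => Pc Λ (r' t) with hg'
  have hg0 : g 0 = 0 := by
    refine lp.ext (funext fun n => ?_)
    show (if n ∈ Λ then 0 else (r 0) n) = (0 : L1) n
    by_cases h : n ∈ Λ
    · simp [h]
    · simp [h, h0 n h]
  have hcont : ContinuousOn g (Set.Icc 0 T) := (Pc Λ).continuous.comp_continuousOn hrc
  have hderiv : ∀ t ∈ Set.Ico 0 T, HasDerivWithinAt g (g' t) (Set.Ici t) t := by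
    intro t ht
    have h1 := hder t (Set.Ico_subset_Icc_self ht)
    have h2 : HasDerivWithinAt r (r' t) (Set.Ici t) t :=
      h1.mono_of_mem_nhdsWithin (Icc_mem_nhdsGE_of_mem ht)
    exact (Pc Λ).hasFDerivAt.comp_hasDerivWithinAt t h2
  have hbound : ∀ t ∈ Set.Ico 0 T, ‖g' t‖ ≤ K * ‖g t‖ + 0 := by
    intro t ht
    rw [add_zero]
    have ht' := Set.Ico_subset_Icc_self ht
    have e2 : ∀ n : ℤ × ℤ, ‖(r' t) n‖₊ = ‖resRHS (⇑(r t)) n‖₊ := by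
      intro n
      rw [← heq t ht' n, nnnorm_mul, nnnorm_neg, Complex.nnnorm_I, one_mul]
    have e1 : (‖g' t‖₊ : ℝ≥0∞) = ∑' n : {n : ℤ × ℤ // n ∉ Λ}, (‖resRHS (⇑(r t)) n.1‖₊ : ℝ≥0∞) := by
      rw [hg', enorm_lp_eq]
      refine Eq.trans ?_
        (tsum_subtype {n : ℤ × ℤ | n ∉ Λ} (fun n => (‖resRHS (⇑(r t)) n‖₊ : ℝ≥0∞))).symm
      congr 1; ext n
      by_cases h : n ∈ Λ <;> simp [Pc_apply, Set.indicator, h, e2]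
    have e3 : (‖g' t‖₊ : ℝ≥0∞) ≤ ((4 * Cn ^ 2 * ‖g t‖₊ : ℝ≥0) : ℝ≥0∞) := by
      rw [e1]
      refine le_trans (key Λ hclosed (r t)) ?_
      push_cast
      gcongr
      exact_mod_cast hCb t ht'
    have e4 : ‖g' t‖₊ ≤ 4 * Cn ^ 2 * ‖g t‖₊ := by exact_mod_cast e3
    calc ‖g' t‖ = ((‖g' t‖₊ : ℝ)) := (coe_nnnorm _).symm
      _ ≤ ((4 * Cn ^ 2 * ‖g t‖₊ : ℝ≥0) : ℝ) := by exact_mod_cast e4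
      _ = K * ‖g t‖ := by rw [hK]; push_cast; ring
  have hzero : ∀ t ∈ Set.Icc (0:ℝ) T, ‖g t‖ ≤ gronwallBound 0 K 0 (t - 0) :=
    norm_le_gronwallBound_of_norm_deriv_right_le hcont hderiv (by rw [hg0]; simp) hbound
  intro t ht n hn
  have h5 : ‖g t‖ ≤ 0 := by simpa [gronwallBound_ε0_δ0] using hzero t ht
  have h6 : g t = 0 := by
    rw [← norm_le_zero_iff]
    exact h5
  have h7 : (g t) n = (r t) n := by
    show (if n ∈ Λ then 0 else (r t) n) = (r t) n
    simp [hn]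
  rw [← h7, h6]
  simp
end
end

section
/- For every b⁰ ∈ ℓ²(ℤ; ℂ) there exists a unique continuously differentiable curve b : ℝ → ℓ²(ℤ; ℂ) with b(0) = b⁰ solving the Toy Model System on ℓ²(ℤ); moreover the ℓ² norm is conserved: ‖b(t)‖_{ℓ²(ℤ)} = ‖b⁰‖_{ℓ²(ℤ)} for all t ∈ ℝ. -/
open scoped BigOperators ENNReal NNReal ComplexConjugate
open Set

noncomputable section

/-- The right-hand side of the Toy Model System on `ℓ²(ℤ)`:
`−i|b_j|² b_j + 2i conj(b_j)(b_{j−1}² + b_{j+1}²)`. -/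
def toyRHSZ (b : ℤ → ℂ) (j : ℤ) : ℂ :=
  -Complex.I * (‖b j‖ : ℂ) ^ 2 * b j +
    2 * Complex.I * (starRingEnd ℂ) (b j) * (b (j - 1) ^ 2 + b (j + 1) ^ 2)

/-- `b : ℝ → ℓ²(ℤ;ℂ)` is a continuously differentiable global solution of the
Toy Model System. -/
def IsToyL2Sol (b : ℝ → lp (fun _ : ℤ => ℂ) 2) : Prop :=
  ∃ b' : ℝ → lp (fun _ : ℤ => ℂ) 2,
    Continuous b' ∧
    (∀ t : ℝ, HasDerivAt b (b' t) t) ∧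
    (∀ (t : ℝ) (j : ℤ), (b' t) j = toyRHSZ (⇑(b t)) j)

abbrev L2Z := lp (fun _ : ℤ => ℂ) 2

lemma two_toReal : (2 : ℝ≥0∞).toReal = 2 := by norm_num

lemma summable_sq (x : L2Z) : Summable fun j => ‖x j‖ ^ (2:ℝ) := by
  have := (lp.memℓp x).summable (p := 2) (by norm_num)
  simpa [two_toReal] using this

/-- membership from pointwise domination -/
lemma memℓp_of_le {f : ℤ → ℂ} {g : ℤ → ℝ} (hg : Memℓp g 2)
    (h : ∀ j, ‖f j‖ ≤ ‖g j‖) : Memℓp f 2 := by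
  apply memℓp_gen
  apply Summable.of_nonneg_of_le (fun j => Real.rpow_nonneg (norm_nonneg _) _)
    (fun j => Real.rpow_le_rpow (norm_nonneg _) (h j) (by norm_num))
  exact hg.summable (by norm_num)

/-- the absolute-value element -/
def absLp (x : L2Z) : lp (fun _ : ℤ => ℝ) 2 :=
  ⟨fun j => ‖x j‖, by
    apply memℓp_gen
    simpa [abs_of_nonneg (norm_nonneg _), Real.norm_eq_abs] using summable_sq x⟩

@[simp] lemma absLp_apply (x : L2Z) (j : ℤ) : absLp x j = ‖x j‖ := rfl

lemma norm_eq_of_hasSum_sq {y : lp (fun _ : ℤ => ℝ) 2} {c : ℝ} (hc : 0 ≤ c)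
    (h : HasSum (fun j => ‖y j‖ ^ (2:ℝ)) (c ^ (2:ℝ))) : ‖y‖ = c := by
  have h2 := lp.hasSum_norm (by norm_num [two_toReal] : 0 < (2:ℝ≥0∞).toReal) y
  rw [two_toReal] at h2
  have := h2.unique h
  have h3 : ‖y‖ ^ (2:ℕ) = c ^ (2:ℕ) := by
    have e : ((2:ℕ):ℝ) = (2:ℝ) := by norm_num
    rw [← Real.rpow_natCast, ← Real.rpow_natCast, e, this]
  rw [← Real.sqrt_sq (norm_nonneg y), ← Real.sqrt_sq hc, h3]

lemma norm_absLp (x : L2Z) : ‖absLp x‖ = ‖x‖ := by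
  apply norm_eq_of_hasSum_sq (norm_nonneg x)
  have h := lp.hasSum_norm (by norm_num [two_toReal] : 0 < (2:ℝ≥0∞).toReal) x
  rw [two_toReal] at h
  simpa [absLp, Real.norm_eq_abs, abs_of_nonneg (norm_nonneg _)] using h

/-- shifted absolute-value element -/
def shAbs (d : ℤ) (x : L2Z) : lp (fun _ : ℤ => ℝ) 2 :=
  ⟨fun j => ‖x (j + d)‖, by
    apply memℓp_gen
    have : Summable ((fun j => ‖x j‖ ^ (2:ℝ)) ∘ (Equiv.addRight d)) :=
      (Equiv.addRight d).summable_iff.mpr (summable_sq x)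
    simpa [Function.comp_def, Real.norm_eq_abs, abs_of_nonneg (norm_nonneg _)] using this⟩

@[simp] lemma shAbs_apply (d : ℤ) (x : L2Z) (j : ℤ) : shAbs d x j = ‖x (j + d)‖ := rfl

lemma norm_shAbs (d : ℤ) (x : L2Z) : ‖shAbs d x‖ = ‖x‖ := by
  apply norm_eq_of_hasSum_sq (norm_nonneg x)
  have h := lp.hasSum_norm (by norm_num [two_toReal] : 0 < (2:ℝ≥0∞).toReal) x
  rw [two_toReal] at h
  have : HasSum ((fun j => ‖x j‖ ^ (2:ℝ)) ∘ (Equiv.addRight d)) (‖x‖ ^ (2:ℝ)) :=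
    ((Equiv.addRight d).hasSum_iff).mpr h
  simpa [shAbs, Function.comp_def, Real.norm_eq_abs, abs_of_nonneg (norm_nonneg _)] using this

/-- norm monotonicity against a real dominating lp function -/
lemma norm_le_of_dom {f : L2Z} {h : lp (fun _ : ℤ => ℝ) 2}
    (hle : ∀ j, ‖f j‖ ≤ ‖h j‖) : ‖f‖ ≤ ‖h‖ := by
  apply lp.norm_le_of_tsum_le (by norm_num [two_toReal]) (norm_nonneg _)
  rw [lp.norm_rpow_eq_tsum (by norm_num [two_toReal]) h]
  exact Summable.tsum_le_tsum (fun j => Real.rpow_le_rpow (norm_nonneg _) (hle j)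
      (by norm_num [two_toReal]))
    ((lp.memℓp f).summable (by norm_num [two_toReal]))
    ((lp.memℓp h).summable (by norm_num [two_toReal]))

lemma abs_sq_eq (z : ℂ) : ((‖z‖ : ℂ)) ^ 2 = z * (starRingEnd ℂ) z := by
  rw [Complex.mul_conj]
  norm_cast
  rw [Complex.sq_norm]

lemma toy_alg (u v p q r s : ℂ) (M : ℝ) (hu : ‖u‖ ≤ M) (hv : ‖v‖ ≤ M) (hp : ‖p‖ ≤ M)
    (hq : ‖q‖ ≤ M) (hr : ‖r‖ ≤ M) (hs : ‖s‖ ≤ M) :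
    ‖(-Complex.I * (‖u‖ : ℂ) ^ 2 * u + 2 * Complex.I * (starRingEnd ℂ) u * (p^2 + r^2))
      - (-Complex.I * (‖v‖ : ℂ) ^ 2 * v + 2 * Complex.I * (starRingEnd ℂ) v * (q^2 + s^2))‖
      ≤ 7*M^2*‖u - v‖ + 4*M^2*‖p - q‖ + 4*M^2*‖r - s‖ := by
  have hM : 0 ≤ M := le_trans (norm_nonneg u) hu
  set cu := (starRingEnd ℂ) u with hcu
  set cv := (starRingEnd ℂ) v with hcv
  have hcuM : ‖cu‖ ≤ M := by rw [hcu, RCLike.norm_conj]; exact hu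
  have hcvM : ‖cv‖ ≤ M := by rw [hcv, RCLike.norm_conj]; exact hv
  have hcd : ‖cu - cv‖ = ‖u - v‖ := by
    rw [hcu, hcv, ← map_sub, RCLike.norm_conj]
  have hD : (-Complex.I * (‖u‖ : ℂ) ^ 2 * u + 2 * Complex.I * cu * (p^2 + r^2))
      - (-Complex.I * (‖v‖ : ℂ) ^ 2 * v + 2 * Complex.I * cv * (q^2 + s^2))
      = -Complex.I * (cu*u*(u-v) + v*u*(cu-cv) + v*cv*(u-v))
        + 2*Complex.I * ((p^2+r^2)*(cu-cv) + cv*(p+q)*(p-q) + cv*(r+s)*(r-s)) := by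
    rw [abs_sq_eq u, abs_sq_eq v, ← hcu, ← hcv]; ring
  rw [hD]
  have B : ∀ a b e : ℂ, ‖a‖ ≤ M → ‖b‖ ≤ M → ‖a*b*e‖ ≤ M^2*‖e‖ := by
    intro a b e ha hb
    rw [norm_mul, norm_mul]
    have : ‖a‖*‖b‖ ≤ M^2 := by nlinarith [norm_nonneg a, norm_nonneg b]
    exact mul_le_mul_of_nonneg_right this (norm_nonneg e)
  have hT1 : ‖cu*u*(u-v) + v*u*(cu-cv) + v*cv*(u-v)‖ ≤ 3*M^2*‖u-v‖ := by
    calc ‖cu*u*(u-v) + v*u*(cu-cv) + v*cv*(u-v)‖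
        ≤ ‖cu*u*(u-v) + v*u*(cu-cv)‖ + ‖v*cv*(u-v)‖ := norm_add_le _ _
      _ ≤ ‖cu*u*(u-v)‖ + ‖v*u*(cu-cv)‖ + ‖v*cv*(u-v)‖ := by
          have := norm_add_le (cu*u*(u-v)) (v*u*(cu-cv)); linarith
      _ ≤ M^2*‖u-v‖ + M^2*‖cu-cv‖ + M^2*‖u-v‖ := by
          have h1 := B cu u (u-v) hcuM hu
          have h2 := B v u (cu-cv) hv hu
          have h3 := B v cv (u-v) hv hcvM
          linarith
      _ = 3*M^2*‖u-v‖ := by rw [hcd]; ring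
  have hT2 : ‖(p^2+r^2)*(cu-cv) + cv*(p+q)*(p-q) + cv*(r+s)*(r-s)‖
      ≤ 2*M^2*‖u-v‖ + 2*M^2*‖p-q‖ + 2*M^2*‖r-s‖ := by
    have h1 : ‖(p^2+r^2)*(cu-cv)‖ ≤ 2*M^2*‖u-v‖ := by
      rw [norm_mul, hcd]
      have : ‖p^2+r^2‖ ≤ 2*M^2 := by
        calc ‖p^2+r^2‖ ≤ ‖p^2‖ + ‖r^2‖ := norm_add_le _ _
          _ ≤ 2*M^2 := by
              rw [norm_pow, norm_pow]
              nlinarith [norm_nonneg p, norm_nonneg r]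
      exact mul_le_mul_of_nonneg_right this (norm_nonneg _)
    have h2 : ‖cv*(p+q)*(p-q)‖ ≤ 2*M^2*‖p-q‖ := by
      rw [norm_mul, norm_mul]
      have : ‖cv‖*‖p+q‖ ≤ 2*M^2 := by
        have := norm_add_le p q
        nlinarith [norm_nonneg cv, norm_nonneg (p+q)]
      nlinarith [norm_nonneg (p-q)]
    have h3 : ‖cv*(r+s)*(r-s)‖ ≤ 2*M^2*‖r-s‖ := by
      rw [norm_mul, norm_mul]
      have : ‖cv‖*‖r+s‖ ≤ 2*M^2 := by
        have := norm_add_le r s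
        nlinarith [norm_nonneg cv, norm_nonneg (r+s)]
      nlinarith [norm_nonneg (r-s)]
    calc ‖(p^2+r^2)*(cu-cv) + cv*(p+q)*(p-q) + cv*(r+s)*(r-s)‖
        ≤ ‖(p^2+r^2)*(cu-cv) + cv*(p+q)*(p-q)‖ + ‖cv*(r+s)*(r-s)‖ := norm_add_le _ _
      _ ≤ ‖(p^2+r^2)*(cu-cv)‖ + ‖cv*(p+q)*(p-q)‖ + ‖cv*(r+s)*(r-s)‖ := by
          have := norm_add_le ((p^2+r^2)*(cu-cv)) (cv*(p+q)*(p-q)); linarith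
      _ ≤ 2*M^2*‖u-v‖ + 2*M^2*‖p-q‖ + 2*M^2*‖r-s‖ := by linarith
  calc ‖-Complex.I * (cu*u*(u-v) + v*u*(cu-cv) + v*cv*(u-v))
        + 2*Complex.I * ((p^2+r^2)*(cu-cv) + cv*(p+q)*(p-q) + cv*(r+s)*(r-s))‖
      ≤ ‖-Complex.I * (cu*u*(u-v) + v*u*(cu-cv) + v*cv*(u-v))‖
        + ‖2*Complex.I * ((p^2+r^2)*(cu-cv) + cv*(p+q)*(p-q) + cv*(r+s)*(r-s))‖ :=
        norm_add_le _ _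
    _ = ‖cu*u*(u-v) + v*u*(cu-cv) + v*cv*(u-v)‖
        + 2*‖(p^2+r^2)*(cu-cv) + cv*(p+q)*(p-q) + cv*(r+s)*(r-s)‖ := by
        rw [norm_mul, norm_mul]
        simp [Complex.norm_I]
    _ ≤ 3*M^2*‖u-v‖ + 2*(2*M^2*‖u-v‖ + 2*M^2*‖p-q‖ + 2*M^2*‖r-s‖) := by linarith
    _ = 7*M^2*‖u - v‖ + 4*M^2*‖p - q‖ + 4*M^2*‖r - s‖ := by ring

lemma toy_pointwise (x y : ℤ → ℂ) (M : ℝ) (hx : ∀ k, ‖x k‖ ≤ M) (hy : ∀ k, ‖y k‖ ≤ M) (j : ℤ) :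
    ‖toyRHSZ x j - toyRHSZ y j‖
      ≤ 7*M^2*‖x j - y j‖ + 4*M^2*‖x (j-1) - y (j-1)‖ + 4*M^2*‖x (j+1) - y (j+1)‖ :=
  toy_alg (x j) (y j) (x (j-1)) (y (j-1)) (x (j+1)) (y (j+1)) M
    (hx j) (hy j) (hx _) (hy _) (hx _) (hy _)

lemma toyRHSZ_zero (j : ℤ) : toyRHSZ (fun _ => 0) j = 0 := by
  simp [toyRHSZ]

lemma coord_le (x : L2Z) (k : ℤ) : ‖x k‖ ≤ ‖x‖ :=
  lp.norm_apply_le_norm (by norm_num) x k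

/-- the dominating element for a difference -/
def domEl (M : ℝ) (D : L2Z) : lp (fun _ : ℤ => ℝ) 2 :=
  (7*M^2) • absLp D + (4*M^2) • shAbs (-1) D + (4*M^2) • shAbs 1 D

lemma domEl_apply (M : ℝ) (D : L2Z) (j : ℤ) :
    domEl M D j = 7*M^2*‖D j‖ + 4*M^2*‖D (j-1)‖ + 4*M^2*‖D (j+1)‖ := by
  simp [domEl, lp.coeFn_add, lp.coeFn_smul, sub_eq_add_neg, Pi.add_apply, Pi.smul_apply]
  rfl

lemma norm_domEl_le (M : ℝ) (hM : 0 ≤ M) (D : L2Z) : ‖domEl M D‖ ≤ 15*M^2*‖D‖ := by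
  have h1 : ‖(7*M^2) • absLp D‖ = 7*M^2*‖D‖ := by
    rw [norm_smul, norm_absLp, Real.norm_eq_abs, abs_of_nonneg (by positivity)]
  have h2 : ‖(4*M^2) • shAbs (-1) D‖ = 4*M^2*‖D‖ := by
    rw [norm_smul, norm_shAbs, Real.norm_eq_abs, abs_of_nonneg (by positivity)]
  have h3 : ‖(4*M^2) • shAbs 1 D‖ = 4*M^2*‖D‖ := by
    rw [norm_smul, norm_shAbs, Real.norm_eq_abs, abs_of_nonneg (by positivity)]
  calc ‖domEl M D‖ ≤ ‖(7*M^2) • absLp D + (4*M^2) • shAbs (-1) D‖ + ‖(4*M^2) • shAbs 1 D‖ :=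
        norm_add_le _ _
    _ ≤ ‖(7*M^2) • absLp D‖ + ‖(4*M^2) • shAbs (-1) D‖ + ‖(4*M^2) • shAbs 1 D‖ := by
        have := norm_add_le ((7*M^2) • absLp D) ((4*M^2) • shAbs (-1) D); linarith
    _ ≤ 15*M^2*‖D‖ := by rw [h1, h2, h3]; nlinarith [norm_nonneg D]

lemma memℓp_toyRHSZ (x : L2Z) : Memℓp (toyRHSZ x) 2 := by
  set M := ‖x‖ with hM
  apply memℓp_of_le (lp.memℓp (domEl M x))
  intro j
  have h := toy_pointwise x (fun _ => 0) M (fun k => coord_le x k) (fun k => by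
    simp only [norm_zero]; rw [hM]; exact norm_nonneg x) j
  simp only [toyRHSZ_zero, sub_zero] at h
  have hd : (7:ℝ)*M^2*‖x j‖ + 4*M^2*‖x (j-1)‖ + 4*M^2*‖x (j+1)‖ ≤ ‖domEl M x j‖ := by
    rw [domEl_apply M x j]
    exact le_abs_self _
  simpa using le_trans h hd

/-- the Toy model vector field on `ℓ²(ℤ)` -/
def toyF (x : L2Z) : L2Z := ⟨toyRHSZ x, memℓp_toyRHSZ x⟩

@[simp] lemma toyF_apply (x : L2Z) (j : ℤ) : toyF x j = toyRHSZ x j := rfl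

lemma toyF_sub_le (x y : L2Z) (M : ℝ) (hx : ‖x‖ ≤ M) (hy : ‖y‖ ≤ M) :
    ‖toyF x - toyF y‖ ≤ 15*M^2*‖x - y‖ := by
  have hM : 0 ≤ M := le_trans (norm_nonneg x) hx
  have hdom : ∀ j, ‖(toyF x - toyF y) j‖ ≤ ‖domEl M (x - y) j‖ := by
    intro j
    have h := toy_pointwise x y M (fun k => le_trans (coord_le x k) hx)
      (fun k => le_trans (coord_le y k) hy) j
    have hc : (toyF x - toyF y) j = toyRHSZ x j - toyRHSZ y j := by
      simp [lp.coeFn_sub]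
    have hc2 : ∀ k : ℤ, (x - y) k = x k - y k := fun k => by simp [lp.coeFn_sub]
    rw [hc]
    rw [domEl_apply]
    refine le_trans h (le_trans ?_ (le_abs_self _))
    rw [hc2 j, hc2 (j-1), hc2 (j+1)]
  calc ‖toyF x - toyF y‖ ≤ ‖domEl M (x - y)‖ := norm_le_of_dom hdom
    _ ≤ 15*M^2*‖x - y‖ := norm_domEl_le M hM _


lemma global_flow {E : Type*} [NormedAddCommGroup E] [NormedSpace ℝ E] [CompleteSpace E]
    {K : ℝ≥0} {C : ℝ} (G : E → E) (hlip : LipschitzWith K G) (hbd : ∀ x, ‖G x‖ ≤ C)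
    (x₀ : E) : ∃ f : ℝ → E, f 0 = x₀ ∧ ∀ t, HasDerivAt f (G (f t)) t := by
  have hC0 : 0 ≤ C := le_trans (norm_nonneg _) (hbd x₀)
  have hexist : ∀ n : ℕ, ∃ f : ℝ → E, f 0 = x₀ ∧
      ∀ t ∈ Icc (-(n+1):ℝ) (n+1), HasDerivWithinAt f (G (f t)) (Icc (-(n+1):ℝ) (n+1)) t := by
    intro n
    have h0 : (0:ℝ) ∈ Icc (-(n+1):ℝ) (n+1) := ⟨neg_nonpos.mpr (by positivity), by positivity⟩
    have hpl : IsPicardLindelof (fun _ x => G x) (⟨0, h0⟩ : Icc (-(n+1):ℝ) (n+1)) x₀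
        (Real.toNNReal (C*(n+1))) 0 (Real.toNNReal C) K :=
      IsPicardLindelof.of_time_independent
        (fun x _ => by rw [Real.coe_toNNReal _ hC0]; exact hbd x)
        hlip.lipschitzOnWith (by
          have : max ((n+1:ℝ) - 0) (0 - (-(n+1))) = (n+1:ℝ) := by
            rw [sub_zero, zero_sub, neg_neg, max_self]
          simp only [zero_sub, neg_neg, max_self, NNReal.coe_zero, sub_zero, Real.coe_toNNReal _ hC0]
          rw [Real.coe_toNNReal _ (by positivity)])
    exact hpl.exists_eq_forall_mem_Icc_hasDerivWithinAt₀
  choose f hf0 hfderiv using hexist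
  have hf' : ∀ (n : ℕ) (t : ℝ), t ∈ Ioo (-(n+1):ℝ) (n+1) → HasDerivAt (f n) (G (f n t)) t :=
    fun n t ht => (hfderiv n t (Ioo_subset_Icc_self ht)).hasDerivAt (Icc_mem_nhds ht.1 ht.2)
  have heq : ∀ m n : ℕ, ∀ t : ℝ, |t| < (m+1:ℝ) → |t| < (n+1:ℝ) → f m t = f n t := by
    intro m n t hm hn
    set a : ℝ := min (m+1:ℝ) (n+1:ℝ) with ha
    have ha0 : 0 < a := lt_min (by positivity) (by positivity)
    have hv : ∀ s : ℝ, LipschitzOnWith K (fun x => G x) univ :=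
      fun _ => hlip.lipschitzOnWith
    have hsub : ∀ k : ℕ, a ≤ (k+1:ℝ) → Ioo (-a) a ⊆ Ioo (-(k+1):ℝ) (k+1) :=
      fun k hk => Ioo_subset_Ioo (by linarith) hk
    have h0 : (0:ℝ) ∈ Ioo (-a) a := ⟨neg_lt_zero.mpr ha0, ha0⟩
    have := ODE_solution_unique_of_mem_Ioo (v := fun _ x => G x) (s := fun _ => univ)
      (K := K) (fun _ _ => hlip.lipschitzOnWith) (t₀ := 0) (a := -a) (b := a)
      (f := f m) (g := f n) h0
      (fun s hs => ⟨hf' m s (hsub m (min_le_left _ _) hs), trivial⟩)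
      (fun s hs => ⟨hf' n s (hsub n (min_le_right _ _) hs), trivial⟩)
      (by rw [hf0 m, hf0 n])
    exact this (abs_lt.mp (lt_min hm hn) |>.imp (fun h => h) (fun h => h) |> fun h => ⟨h.1, h.2⟩)
  refine ⟨fun t => f (Nat.floor |t|) t, ?_, ?_⟩
  · simpa using hf0 0
  · intro t
    set n : ℕ := Nat.floor |t| with hn
    have hlt : |t| < (n+1:ℝ) := by
      have := Nat.lt_floor_add_one |t|
      push_cast at this ⊢
      exact this
    have hkey : ∀ s : ℝ, |s| < (n+1:ℝ) → f (Nat.floor |s|) s = f n s := by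
      intro s hs
      apply heq
      · have := Nat.lt_floor_add_one |s|
        push_cast at this ⊢
        exact this
      · exact hs
    have hmem : t ∈ Ioo (-(n+1):ℝ) (n+1) := abs_lt.mp hlt |> fun h => ⟨h.1, h.2⟩
    have hev : (fun s => f (Nat.floor |s|) s) =ᶠ[nhds t] f n := by
      filter_upwards [Ioo_mem_nhds hmem.1 hmem.2] with s hs
      exact hkey s (abs_lt.mpr ⟨hs.1, hs.2⟩)
    have hd := hf' n t hmem
    have : f (Nat.floor |t|) t = f n t := hkey t hlt
    rw [show G (f (Nat.floor |t|) t) = G (f n t) by rw [this]]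
    exact hd.congr_of_eventuallyEq hev


variable {E : Type*} [NormedAddCommGroup E] [NormedSpace ℝ E]

/-- radial projection onto the closed ball of radius `R` -/
def projB (R : ℝ) (x : E) : E := (R / max R ‖x‖) • x

lemma projB_eq_self {R : ℝ} (hR : 0 < R) {x : E} (h : ‖x‖ ≤ R) : projB R x = x := by
  rw [projB, max_eq_left h, div_self (ne_of_gt hR), one_smul]

lemma norm_projB_le {R : ℝ} (hR : 0 < R) (x : E) : ‖projB R x‖ ≤ R := by
  rw [projB, norm_smul, Real.norm_eq_abs]
  have hM : 0 < max R ‖x‖ := lt_of_lt_of_le hR (le_max_left _ _)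
  rw [abs_of_nonneg (by positivity)]
  rw [div_mul_eq_mul_div, div_le_iff₀ hM]
  have : ‖x‖ ≤ max R ‖x‖ := le_max_right _ _
  nlinarith

lemma projB_lip {R : ℝ} (hR : 0 < R) (x y : E) :
    ‖projB R x - projB R y‖ ≤ 2 * ‖x - y‖ := by
  set Mx := max R ‖x‖ with hMx
  set My := max R ‖y‖ with hMy
  have hMx0 : 0 < Mx := lt_of_lt_of_le hR (le_max_left _ _)
  have hMy0 : 0 < My := lt_of_lt_of_le hR (le_max_left _ _)
  have hRx : R ≤ Mx := le_max_left _ _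
  have hRy : R ≤ My := le_max_left _ _
  have hxMx : ‖x‖ ≤ Mx := le_max_right _ _
  have hyMy : ‖y‖ ≤ My := le_max_right _ _
  have hsplit : projB R x - projB R y = (R / Mx) • (x - y) + (R / Mx - R / My) • y := by
    rw [projB, projB, smul_sub, sub_smul]; abel
  have hdM : |Mx - My| ≤ ‖x - y‖ := by
    have h1 : |max ‖x‖ R - max ‖y‖ R| ≤ |‖x‖ - ‖y‖| := abs_max_sub_max_le_abs _ _ _
    rw [hMx, hMy, max_comm R ‖x‖, max_comm R ‖y‖]
    exact le_trans h1 (abs_norm_sub_norm_le x y)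
  have h1 : ‖(R / Mx) • (x - y)‖ ≤ ‖x - y‖ := by
    rw [norm_smul, Real.norm_eq_abs, abs_of_nonneg (by positivity)]
    have : R / Mx ≤ 1 := (div_le_one hMx0).mpr hRx
    nlinarith [norm_nonneg (x - y)]
  have h2 : ‖(R / Mx - R / My) • y‖ ≤ ‖x - y‖ := by
    rw [norm_smul, Real.norm_eq_abs]
    have he : R / Mx - R / My = R * (My - Mx) / (Mx * My) := by
      field_simp
    rw [he, abs_div, abs_mul, abs_of_nonneg hR.le, abs_of_pos (mul_pos hMx0 hMy0)]
    rw [div_mul_eq_mul_div, div_le_iff₀ (mul_pos hMx0 hMy0)]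
    have habs : |My - Mx| ≤ ‖x - y‖ := by rw [abs_sub_comm]; exact hdM
    have s1 : R * |My - Mx| ≤ Mx * ‖x - y‖ :=
      mul_le_mul hRx habs (abs_nonneg _) (le_of_lt hMx0)
    have s2 : R * |My - Mx| * ‖y‖ ≤ Mx * ‖x - y‖ * My :=
      mul_le_mul s1 hyMy (norm_nonneg y) (mul_nonneg hMx0.le (norm_nonneg _))
    calc R * |My - Mx| * ‖y‖ ≤ Mx * ‖x - y‖ * My := s2
      _ = ‖x - y‖ * (Mx * My) := by ring
  calc ‖projB R x - projB R y‖ = ‖(R / Mx) • (x - y) + (R / Mx - R / My) • y‖ := by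
        rw [hsplit]
    _ ≤ ‖(R / Mx) • (x - y)‖ + ‖(R / Mx - R / My) • y‖ := norm_add_le _ _
    _ ≤ 2 * ‖x - y‖ := by linarith

noncomputable section

lemma abs_sq_eq' (z : ℂ) : ((‖z‖ : ℂ)) ^ 2 = z * (starRingEnd ℂ) z := by
  rw [Complex.mul_conj]; norm_cast; rw [Complex.sq_norm]

lemma point_re (u p r : ℂ) :
    (((starRingEnd ℂ) u) * (-Complex.I * (‖u‖ : ℂ) ^ 2 * u
        + 2 * Complex.I * ((starRingEnd ℂ) u) * (p ^ 2 + r ^ 2))).re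
    = 2 * (((starRingEnd ℂ) p) ^ 2 * u ^ 2).im
      - 2 * (((starRingEnd ℂ) u) ^ 2 * r ^ 2).im := by
  rw [abs_sq_eq']
  simp only [Complex.mul_re, Complex.mul_im, Complex.add_re, Complex.add_im,
    Complex.neg_re, Complex.neg_im, Complex.I_re, Complex.I_im, Complex.conj_re,
    Complex.conj_im, Complex.ofReal_re, Complex.ofReal_im, pow_two,
    Complex.re_ofNat, Complex.im_ofNat]
  ring

lemma summable_sq' (x : L2Z) : Summable fun j => ‖x j‖ ^ (2:ℕ) := by
  have h := summable_sq x
  have : (fun j => ‖x j‖ ^ (2:ℝ)) = fun j => ‖x j‖ ^ (2:ℕ) := by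
    funext j
    rw [← Real.rpow_natCast]
    norm_num
  rwa [this] at h

set_option maxHeartbeats 1000000 in
lemma re_inner_toyF (x : L2Z) : (inner (𝕜 := ℂ) x (toyF x) : ℂ).re = 0 := by
  set h : ℤ → ℝ := fun j => 2 * (((starRingEnd ℂ) (x j)) ^ 2 * (x (j+1)) ^ 2).im with hh
  have habs : ∀ j, |h j| ≤ 2 * ‖x‖^2 * ‖x j‖^(2:ℕ) := by
    intro j
    have h1 : |(((starRingEnd ℂ) (x j)) ^ 2 * (x (j+1)) ^ 2).im|
        ≤ ‖(((starRingEnd ℂ) (x j)) ^ 2 * (x (j+1)) ^ 2)‖ := by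
      exact Complex.abs_im_le_norm _
    have h2 : ‖(((starRingEnd ℂ) (x j)) ^ 2 * (x (j+1)) ^ 2)‖ ≤ ‖x‖^2 * ‖x j‖^(2:ℕ) := by
      rw [norm_mul, norm_pow, norm_pow, RCLike.norm_conj]
      have c1 := coord_le x (j+1)
      have c0 := norm_nonneg (x j)
      have c2 := norm_nonneg (x (j+1))
      have c3 := norm_nonneg x
      have c4 : ‖x (j+1)‖^2 ≤ ‖x‖^2 := by nlinarith
      calc ‖x j‖^2 * ‖x (j+1)‖^2 ≤ ‖x j‖^2 * ‖x‖^2 :=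
            mul_le_mul_of_nonneg_left c4 (by positivity)
        _ = ‖x‖^2 * ‖x j‖^(2:ℕ) := by ring
    rw [hh, abs_mul, abs_of_nonneg (by norm_num : (0:ℝ) ≤ 2)]
    calc 2 * |(((starRingEnd ℂ) (x j)) ^ 2 * (x (j+1)) ^ 2).im|
        ≤ 2 * (‖x‖^2 * ‖x j‖^(2:ℕ)) := by linarith [le_trans h1 h2]
      _ = 2 * ‖x‖^2 * ‖x j‖^(2:ℕ) := by ring
  have hsummable : Summable h := by
    apply Summable.of_abs
    apply Summable.of_nonneg_of_le (fun j => abs_nonneg _) habs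
    exact (summable_sq' x).mul_left _
  have hsh : Summable (fun j => h (j - 1)) :=
    ((Equiv.subRight (1:ℤ)).summable_iff).mpr hsummable
  have hpt : ∀ j, (((starRingEnd ℂ) (x j)) * toyRHSZ (⇑x) j).re = h (j-1) - h j := by
    intro j
    have hp := point_re (x j) (x (j-1)) (x (j+1))
    have : toyRHSZ (⇑x) j = -Complex.I * (‖x j‖ : ℂ) ^ 2 * (x j)
        + 2 * Complex.I * ((starRingEnd ℂ) (x j)) * ((x (j-1)) ^ 2 + (x (j+1)) ^ 2) := rfl
    rw [this, hp]
    have e1 : (j : ℤ) - 1 + 1 = j := by ring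
    simp only [hh, e1]
  have hsummable2 : Summable (fun j => ((starRingEnd ℂ) (x j)) * toyRHSZ (⇑x) j) := by
    have := lp.summable_inner (𝕜 := ℂ) x (toyF x)
    simpa [RCLike.inner_apply, mul_comm] using this
  have hinner : (inner (𝕜 := ℂ) x (toyF x) : ℂ)
      = ∑' j, ((starRingEnd ℂ) (x j)) * toyRHSZ (⇑x) j := by
    rw [lp.inner_eq_tsum]
    congr 1
    funext j
    simp [RCLike.inner_apply, mul_comm]
  calc (inner (𝕜 := ℂ) x (toyF x) : ℂ).re
      = ∑' j, (((starRingEnd ℂ) (x j)) * toyRHSZ (⇑x) j).re := by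
        rw [hinner]
        have := Complex.reCLM.map_tsum hsummable2
        simpa using this
    _ = ∑' j, (h (j-1) - h j) := tsum_congr hpt
    _ = (∑' j, h (j-1)) - ∑' j, h j := Summable.tsum_sub hsh hsummable
    _ = 0 := by
        have he : (∑' j : ℤ, h (j - 1)) = ∑' j, h j := by
          have := (Equiv.subRight (1:ℤ)).tsum_eq h
          simpa [Equiv.subRight_apply] using this
        rw [he, sub_self]

lemma toyF_zero : toyF (0 : L2Z) = 0 := by
  apply lp.ext
  funext j
  have h0 : ⇑(0 : L2Z) = (fun _ : ℤ => (0:ℂ)) := lp.coeFn_zero _ _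
  show toyRHSZ (⇑(0 : L2Z)) j = (0 : L2Z) j
  rw [h0, toyRHSZ_zero]

lemma const_of_deriv_zero_ball {f : ℝ → ℝ} {t₀ δ : ℝ}
    (hd : ∀ s ∈ Metric.ball t₀ δ, HasDerivAt f 0 s) :
    ∀ s ∈ Metric.ball t₀ δ, f s = f t₀ := by
  intro s hs
  rcases le_or_gt δ 0 with h | hδ
  · exact absurd hs (by simp [Metric.ball_eq_empty.mpr h])
  have ht₀ : t₀ ∈ Metric.ball t₀ δ := Metric.mem_ball_self hδ
  apply (convex_ball t₀ δ).is_const_of_fderivWithin_eq_zero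
    (fun z hz => ((hd z hz).differentiableAt).differentiableWithinAt) ?_ hs ht₀
  intro z hz
  rw [fderivWithin_of_isOpen Metric.isOpen_ball hz]
  have h2 : HasFDerivAt f (0 : ℝ →L[ℝ] ℝ) z := by
    have := (hd z hz).hasFDerivAt
    simpa using this
  exact h2.fderiv

lemma toyF_lipschitzOnWith {M : ℝ} (hM : 0 ≤ M) :
    LipschitzOnWith (Real.toNNReal (15*M^2)) toyF (Metric.closedBall (0:L2Z) M) := by
  apply LipschitzOnWith.of_dist_le_mul
  intro x hx y hy
  rw [dist_eq_norm, dist_eq_norm, Real.coe_toNNReal _ (by positivity)]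
  exact toyF_sub_le x y M (by simpa using hx) (by simpa using hy)

set_option maxHeartbeats 1600000 in
/-- derivative of the squared norm along a toy flow trajectory -/
lemma normSq_deriv {b : ℝ → L2Z} {v : L2Z} {s : ℝ} (hb : HasDerivAt b v s)
    (hv : (inner (𝕜 := ℂ) (b s) v : ℂ).re = 0) :
    HasDerivAt (fun τ => ‖b τ‖^2) 0 s := by
  have h1 : HasDerivAt (fun τ => (inner (𝕜 := ℂ) (b τ) (b τ) : ℂ))
      ((inner (𝕜 := ℂ) (b s) v : ℂ) + (inner (𝕜 := ℂ) v (b s) : ℂ)) s :=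
    HasDerivAt.inner ℂ hb hb
  have h2 : HasDerivAt (fun τ => ((inner (𝕜 := ℂ) (b τ) (b τ) : ℂ)).re)
      (((inner (𝕜 := ℂ) (b s) v : ℂ) + (inner (𝕜 := ℂ) v (b s) : ℂ)).re) s := by
    have := (Complex.reCLM.hasFDerivAt).comp_hasDerivAt s h1
    simpa [Function.comp_def] using this
  have h3 : (((inner (𝕜 := ℂ) (b s) v : ℂ) + (inner (𝕜 := ℂ) v (b s) : ℂ))).re = 0 := by
    rw [Complex.add_re]
    have hc : (inner (𝕜 := ℂ) v (b s) : ℂ) = (starRingEnd ℂ) (inner (𝕜 := ℂ) (b s) v : ℂ) :=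
      (inner_conj_symm _ _).symm
    rw [hc, Complex.conj_re, hv]
    norm_num
  have h4 : (fun τ => ((inner (𝕜 := ℂ) (b τ) (b τ) : ℂ)).re) = fun τ => ‖b τ‖^2 := by
    funext τ
    have := inner_self_eq_norm_sq (𝕜 := ℂ) (b τ)
    simpa [RCLike.re_to_complex] using this
  rw [h4, h3] at h2
  exact h2

set_option maxHeartbeats 3000000 in
/-- Global well-posedness of the Toy Model System in `ℓ²(ℤ)`, with conservation of
the `ℓ²` norm. -/
theorem stmt6 (b0 : lp (fun _ : ℤ => ℂ) 2) :
    ∃ b : ℝ → lp (fun _ : ℤ => ℂ) 2,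
      (IsToyL2Sol b ∧ b 0 = b0) ∧
      (∀ t : ℝ, ‖b t‖ = ‖b0‖) ∧
      (∀ b₂ : ℝ → lp (fun _ : ℤ => ℂ) 2, IsToyL2Sol b₂ → b₂ 0 = b0 → b₂ = b) := by
  set R : ℝ := ‖b0‖ + 1 with hRdef
  have hR0 : 0 < R := by positivity
  have hb0R : ‖b0‖ < R := by rw [hRdef]; linarith
  set G : L2Z → L2Z := fun x => toyF (projB R x) with hGdef
  have hGx : ∀ x, G x = toyF (projB R x) := fun _ => rfl
  have hGsub : ∀ x y : L2Z, ‖G x - G y‖ ≤ 30*R^2 * ‖x - y‖ := by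
    intro x y
    have h1 : ‖toyF (projB R x) - toyF (projB R y)‖ ≤ 15*R^2*‖projB R x - projB R y‖ :=
      toyF_sub_le _ _ R (norm_projB_le hR0 x) (norm_projB_le hR0 y)
    have h2 := projB_lip hR0 x y
    have h3 : (15:ℝ)*R^2*‖projB R x - projB R y‖ ≤ 15*R^2*(2*‖x - y‖) :=
      mul_le_mul_of_nonneg_left h2 (by positivity)
    calc ‖G x - G y‖ = ‖toyF (projB R x) - toyF (projB R y)‖ := by rw [hGx x, hGx y]
      _ ≤ 30*R^2*‖x-y‖ := by linarith
  have hGlip : LipschitzWith (Real.toNNReal (30*R^2)) G := by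
    apply LipschitzWith.of_dist_le_mul
    intro x y
    rw [dist_eq_norm, dist_eq_norm, Real.coe_toNNReal _ (by positivity)]
    exact hGsub x y
  have hGbd : ∀ x, ‖G x‖ ≤ 15*R^3 := by
    intro x
    have h1 : ‖toyF (projB R x) - toyF 0‖ ≤ 15*R^2*‖projB R x - 0‖ :=
      toyF_sub_le _ _ R (norm_projB_le hR0 x) (by simpa using hR0.le)
    rw [toyF_zero, sub_zero, sub_zero] at h1
    have h2 : (15:ℝ)*R^2*‖projB R x‖ ≤ 15*R^2*R :=
      mul_le_mul_of_nonneg_left (norm_projB_le hR0 x) (by positivity)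
    calc ‖G x‖ = ‖toyF (projB R x)‖ := by rw [hGx x]
      _ ≤ 15*R^2*‖projB R x‖ := h1
      _ ≤ 15*R^2*R := h2
      _ = 15*R^3 := by ring
  obtain ⟨b, hb0, hbd⟩ := global_flow G hGlip hGbd b0
  have hbcont : Continuous b := continuous_iff_continuousAt.mpr fun t => (hbd t).continuousAt
  have hnormcont : Continuous fun t => ‖b t‖ := hbcont.norm
  have hAopen : ∀ t₀, ‖b t₀‖ = ‖b0‖ → ∃ δ > 0, ∀ s ∈ Metric.ball t₀ δ, ‖b s‖ = ‖b0‖ := by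
    intro t₀ ht₀
    have hlt : ‖b t₀‖ < R := by rw [ht₀]; exact hb0R
    have hU : IsOpen {s : ℝ | ‖b s‖ < R} := isOpen_lt hnormcont continuous_const
    obtain ⟨δ, hδ0, hball⟩ := Metric.isOpen_iff.mp hU t₀ hlt
    refine ⟨δ, hδ0, ?_⟩
    have hderiv0 : ∀ s ∈ Metric.ball t₀ δ, HasDerivAt (fun τ => ‖b τ‖^2) 0 s := by
      intro s hs
      have hsR : ‖b s‖ < R := hball hs
      have hGb : G (b s) = toyF (b s) := by
        rw [hGx, projB_eq_self hR0 hsR.le]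
      have hre : (inner (𝕜 := ℂ) (b s) (G (b s)) : ℂ).re = 0 := by
        rw [hGb]; exact re_inner_toyF (b s)
      exact normSq_deriv (hbd s) hre
    intro s hs
    have hsq := const_of_deriv_zero_ball hderiv0 s hs
    have h2 : ‖b s‖^2 = ‖b0‖^2 := by
      rw [hsq, ht₀]
    rw [← Real.sqrt_sq (norm_nonneg (b s)), ← Real.sqrt_sq (norm_nonneg b0), h2]
  have hA : {t : ℝ | ‖b t‖ = ‖b0‖} = Set.univ := by
    apply IsClopen.eq_univ
    · constructor
      · exact isClosed_eq hnormcont continuous_const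
      · rw [Metric.isOpen_iff]
        intro t₀ ht₀
        obtain ⟨δ, hδ0, h⟩ := hAopen t₀ ht₀
        exact ⟨δ, hδ0, fun s hs => h s hs⟩
    · exact ⟨0, by show ‖b 0‖ = ‖b0‖; rw [hb0]⟩
  have hcons : ∀ t, ‖b t‖ = ‖b0‖ := by
    intro t
    have : t ∈ {t : ℝ | ‖b t‖ = ‖b0‖} := hA ▸ Set.mem_univ t
    exact this
  have hGbt : ∀ t, G (b t) = toyF (b t) := fun t => by
    rw [hGx, projB_eq_self hR0 (by rw [hcons t]; exact hb0R.le)]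
  have hsol : IsToyL2Sol b := by
    refine ⟨fun t => G (b t), hGlip.continuous.comp hbcont, hbd, ?_⟩
    intro t j
    show (G (b t)) j = toyRHSZ (⇑(b t)) j
    rw [hGbt t]
    rfl
  refine ⟨b, ⟨hsol, hb0⟩, hcons, ?_⟩
  intro b₂ hsol2 hb20
  obtain ⟨b₂', hb₂cont, hb₂d, hb₂coord⟩ := hsol2
  have hb₂F : ∀ t, b₂' t = toyF (b₂ t) := by
    intro t
    apply lp.ext
    funext j
    exact hb₂coord t j
  have hb₂deriv : ∀ t, HasDerivAt b₂ (toyF (b₂ t)) t := fun t => (hb₂F t) ▸ hb₂d t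
  have hb₂c : Continuous b₂ := continuous_iff_continuousAt.mpr fun t => (hb₂d t).continuousAt
  have hCopen : ∀ t₀, b₂ t₀ = b t₀ → ∃ δ > 0, ∀ s ∈ Metric.ball t₀ δ, b₂ s = b s := by
    intro t₀ ht₀
    have hU : IsOpen {s : ℝ | ‖b₂ s‖ < R} := isOpen_lt hb₂c.norm continuous_const
    have ht₀U : ‖b₂ t₀‖ < R := by rw [ht₀, hcons t₀]; exact hb0R
    obtain ⟨δ, hδ0, hball⟩ := Metric.isOpen_iff.mp hU t₀ ht₀U
    refine ⟨δ, hδ0, ?_⟩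
    have hK : ∀ t : ℝ, LipschitzOnWith (Real.toNNReal (15*R^2)) ((fun (_:ℝ) (x:L2Z) => toyF x) t)
        ((fun (_:ℝ) => Metric.closedBall (0:L2Z) R) t) := fun _ => toyF_lipschitzOnWith hR0.le
    have h0mem : t₀ ∈ Set.Ioo (t₀ - δ) (t₀ + δ) := by constructor <;> linarith
    have heqon := ODE_solution_unique_of_mem_Ioo (v := fun _ x => toyF x)
      (s := fun _ => Metric.closedBall (0:L2Z) R) (fun t _ => hK t) (f := b₂) (g := b) h0mem
      (fun s hs => ⟨hb₂deriv s, by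
        simp only [Metric.mem_closedBall, dist_zero_right]
        exact (hball (by rw [Real.ball_eq_Ioo]; exact hs)).le⟩)
      (fun s hs => ⟨by
        show HasDerivAt b (toyF (b s)) s
        have hd := hbd s
        rw [hGbt s] at hd
        exact hd, by
        simp only [Metric.mem_closedBall, dist_zero_right]
        rw [hcons s]; exact hb0R.le⟩)
      ht₀
    intro s hs
    exact heqon (by rwa [Real.ball_eq_Ioo] at hs)
  have hC : {t : ℝ | b₂ t = b t} = Set.univ := by
    apply IsClopen.eq_univ
    · constructor
      · exact isClosed_eq hb₂c hbcont
      · rw [Metric.isOpen_iff]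
        intro t₀ ht₀
        obtain ⟨δ, hδ0, h⟩ := hCopen t₀ ht₀
        exact ⟨δ, hδ0, fun s hs => h s hs⟩
    · exact ⟨0, by show b₂ 0 = b 0; rw [hb20, hb0]⟩
  funext t
  have : t ∈ {t : ℝ | b₂ t = b t} := hC ▸ Set.mem_univ t
  exact this
end
end
end

section
/- Let b : ℝ → ℓ²(ℤ; ℂ) be a continuously differentiable solution of the Toy Model System on ℓ²(ℤ), let I ⊆ ℤ, and suppose that at some time t₀ one has b_j(t₀) = 0 for all j ∉ I. Then b_j(t) = 0 for all j ∉ I and all t ∈ ℝ; that is, the support of a solution is constant in time. -/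
open scoped BigOperators ENNReal

noncomputable section

/-- Coordinate evaluation as a continuous linear map on `ℓ²(ℤ;ℂ)`. -/
def toyEvalCLM (j : ℤ) : lp (fun _ : ℤ => ℂ) 2 →L[ℂ] ℂ :=
  LinearMap.mkContinuous
    { toFun := fun f => f j
      map_add' := fun f g => congrFun (lp.coeFn_add f g) j
      map_smul' := fun c f => congrFun (lp.coeFn_smul c f) j } 1
    (fun f => by
      simpa using lp.norm_apply_le_norm (by norm_num : (2 : ℝ≥0∞) ≠ 0) f j)

lemma norm_toyRHSZ_le (x : lp (fun _ : ℤ => ℂ) 2) (j : ℤ) :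
    ‖toyRHSZ (⇑x) j‖ ≤ 5 * ‖x‖ ^ 2 * ‖x j‖ := by
  have hcoord : ∀ i : ℤ, ‖x i‖ ≤ ‖x‖ := fun i =>
    lp.norm_apply_le_norm (by norm_num : (2 : ℝ≥0∞) ≠ 0) x i
  have hx : (0:ℝ) ≤ ‖x‖ := norm_nonneg _
  have h1 : ‖-Complex.I * (‖x j‖ : ℂ) ^ 2 * x j‖ = ‖x j‖ ^ 2 * ‖x j‖ := by
    rw [norm_mul, norm_mul]
    simp [norm_pow, Complex.norm_real,
      abs_of_nonneg (norm_nonneg _)]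
  have h2 : ‖2 * Complex.I * (starRingEnd ℂ) (x j) * (x (j - 1) ^ 2 + x (j + 1) ^ 2)‖
      ≤ 2 * ‖x j‖ * (‖x (j-1)‖ ^ 2 + ‖x (j+1)‖ ^ 2) := by
    rw [norm_mul, norm_mul, norm_mul]
    simp only [Complex.norm_two, Complex.norm_I, mul_one,
      Complex.norm_conj]
    gcongr
    calc ‖x (j - 1) ^ 2 + x (j + 1) ^ 2‖
        ≤ ‖x (j - 1) ^ 2‖ + ‖x (j + 1) ^ 2‖ := norm_add_le _ _
      _ = ‖x (j-1)‖ ^ 2 + ‖x (j+1)‖ ^ 2 := by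
          simp [norm_pow]
  calc ‖toyRHSZ (⇑x) j‖
      ≤ ‖-Complex.I * (‖x j‖ : ℂ) ^ 2 * x j‖ +
        ‖2 * Complex.I * (starRingEnd ℂ) (x j) * (x (j - 1) ^ 2 + x (j + 1) ^ 2)‖ :=
        norm_add_le _ _
    _ ≤ ‖x j‖ ^ 2 * ‖x j‖ + 2 * ‖x j‖ * (‖x (j-1)‖ ^ 2 + ‖x (j+1)‖ ^ 2) := by
        rw [h1]; exact add_le_add le_rfl h2
    _ ≤ ‖x‖ ^ 2 * ‖x j‖ + 2 * ‖x j‖ * (‖x‖ ^ 2 + ‖x‖ ^ 2) := by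
        gcongr <;> [exact hcoord j; exact hcoord (j-1); exact hcoord (j+1)]
    _ = 5 * ‖x‖ ^ 2 * ‖x j‖ := by ring

/-- Scalar Grönwall uniqueness on `[a, t]`. -/
lemma toy_key_ge (g g' : ℝ → ℂ) (hg : ∀ t, HasDerivAt g (g' t) t)
    (K : ℝ → ℝ) (hK : Continuous K) (hbound : ∀ t, ‖g' t‖ ≤ K t * ‖g t‖)
    (a : ℝ) (ha : g a = 0) (t : ℝ) (hat : a ≤ t) : g t = 0 := by
  obtain ⟨K₀, hK₀⟩ : ∃ K₀, ∀ s ∈ Set.Icc a t, K s ≤ K₀ := by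
    obtain ⟨s₀, -, hs₀⟩ := (isCompact_Icc (a := a) (b := t)).exists_isMaxOn
      (Set.nonempty_Icc.2 hat) hK.continuousOn
    exact ⟨K s₀, hs₀⟩
  have hcont : ContinuousOn g (Set.Icc a t) :=
    (continuous_iff_continuousAt.2 fun s => (hg s).continuousAt).continuousOn
  have := norm_le_gronwallBound_of_norm_deriv_right_le (f := g) (f' := g')
    (δ := 0) (K := K₀) (ε := 0) (a := a) (b := t) hcont
    (fun s _ => (hg s).hasDerivWithinAt)
    (by simp [ha])
    (fun s hs => by
      have h1 := hbound s
      have h2 : K s * ‖g s‖ ≤ K₀ * ‖g s‖ :=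
        mul_le_mul_of_nonneg_right (hK₀ s (Set.Ico_subset_Icc_self hs)) (norm_nonneg _)
      linarith)
    t (Set.right_mem_Icc.2 hat)
  rw [gronwallBound_ε0_δ0] at this
  exact norm_le_zero_iff.1 this

lemma toy_key (g g' : ℝ → ℂ) (hg : ∀ t, HasDerivAt g (g' t) t)
    (K : ℝ → ℝ) (hK : Continuous K) (hbound : ∀ t, ‖g' t‖ ≤ K t * ‖g t‖)
    (a : ℝ) (ha : g a = 0) (t : ℝ) : g t = 0 := by
  rcases le_or_gt a t with h | h
  · exact toy_key_ge g g' hg K hK hbound a ha t h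
  · have hrefl : ∀ s : ℝ, HasDerivAt (fun u => g (2 * a - u)) (-(g' (2 * a - s))) s := by
      intro s
      have h1 : HasDerivAt (fun u : ℝ => 2 * a - u) (-1) s := by
        simpa using (hasDerivAt_id s).const_sub (2 * a)
      have h2 := (hg (2 * a - s)).scomp s h1
      simp at h2; exact h2
    have := toy_key_ge (fun u => g (2 * a - u)) (fun s => -(g' (2 * a - s))) hrefl
      (fun s => K (2 * a - s)) (hK.comp (by continuity))
      (fun s => by simpa using hbound (2 * a - s))
      a (by simpa [two_mul] using ha) (2 * a - t) (by linarith)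
    simpa using this

/-- The support of a solution of the Toy Model System on `ℓ²(ℤ)` is constant in time:
if the solution vanishes outside `I` at one time, it does so at all times. -/
theorem stmt8 (b : ℝ → lp (fun _ : ℤ => ℂ) 2) (hb : IsToyL2Sol b)
    (I : Set ℤ) (t₀ : ℝ) (h0 : ∀ j ∉ I, (b t₀) j = 0) :
    ∀ (t : ℝ), ∀ j ∉ I, (b t) j = 0 := by
  obtain ⟨b', hb'cont, hderiv, hspec⟩ := hb
  intro t j hj
  have hbc : Continuous b := continuous_iff_continuousAt.2 fun s => (hderiv s).continuousAt
  have hg : ∀ s, HasDerivAt (fun u => (b u) j) ((b' s) j) s := by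
    intro s
    exact ((toyEvalCLM j).restrictScalars ℝ).hasFDerivAt.comp_hasDerivAt s (hderiv s)
  have hbound : ∀ s, ‖(b' s) j‖ ≤ (5 * ‖b s‖ ^ 2) * ‖(b s) j‖ := by
    intro s
    rw [hspec s j]
    exact norm_toyRHSZ_le (b s) j
  exact toy_key (fun u => (b u) j) (fun s => (b' s) j) hg
    (fun s => 5 * ‖b s‖ ^ 2) (by fun_prop) hbound t₀ (h0 j hj) t
end
end

section
/- Gronwall-type inequality, upper bounds: Let α, β, γ > 0, C₀ > 0, 0 < δ < 1 and T > 0. There exists a constant C (depending only on α, β, γ, C₀) with the following property. Let E₁, E₂ be normed real vector spaces, let x : [0,T] → E₁ and y : [0,T] → E₂ be differentiable, and let f, g : [0,T] → [0,∞) be continuous, with ‖x′(t)‖ ≤ C₀ ( δ e^{−αt} ‖x(t)‖ + δ ‖y(t)‖ + f(t) ) and ‖y′(t)‖ ≤ C₀ ( δ e^{−βt} ‖x(t)‖ + δ e^{−γt} ‖y(t)‖ + g(t) ) for all 0 ≤ t ≤ T. Then for all 0 ≤ t ≤ T: ‖x(t)‖ ≤ C ( (1+t) ‖x(0)‖ +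 t ‖y(0)‖ + ∫₀ᵗ ( (1 + t e^{−βs}) f(s) + t g(s) ) ds ) and ‖y(t)‖ ≤ C ( ‖x(0)‖ + ‖y(0)‖ + ∫₀ᵗ ( e^{−βs} f(s) + g(s) ) ds ). -/
open Set Filter Real intervalIntegral MeasureTheory
open scoped Topology

private lemma slope_norm_mul_lt' {E : Type*} [NormedAddCommGroup E] [NormedSpace ℝ E]
    {x : ℝ → E} {xd : E} {T t : ℝ} (ht : t ∈ Set.Ico (0:ℝ) T)
    (hx : HasDerivWithinAt x xd (Set.Icc 0 T) t)
    {cf : ℝ → ℝ} {cd : ℝ} (hc : HasDerivAt cf cd t) (hc0 : ∀ z, 0 ≤ cf z)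
    {r : ℝ} (hr : cd * ‖x t‖ + cf t * ‖xd‖ < r) :
    ∀ᶠ z in 𝓝[>] t, slope (fun s => cf s * ‖x s‖) t z < r := by
  have hqx : Tendsto (slope x t) (𝓝[>] t) (𝓝 xd) := by
    have h1 : Tendsto (slope x t) (𝓝[Set.Icc 0 T \ {t}] t) (𝓝 xd) :=
      hasDerivWithinAt_iff_tendsto_slope.1 hx
    rw [← nhdsWithin_Ioc_eq_nhdsGT ht.2]
    exact h1.mono_left (nhdsWithin_mono _ (fun z hz =>
      ⟨⟨le_trans ht.1 hz.1.le, hz.2⟩, hz.1.ne'⟩))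
  have hqc : Tendsto (slope cf t) (𝓝[>] t) (𝓝 cd) :=
    (hasDerivAt_iff_tendsto_slope.1 hc).mono_left
      (nhdsWithin_mono _ (fun z hz => hz.ne'))
  have hcf : Tendsto cf (𝓝[>] t) (𝓝 (cf t)) :=
    hc.continuousAt.continuousWithinAt
  have hg : Tendsto (fun z => cf z * ‖slope x t z‖ + slope cf t z * ‖x t‖) (𝓝[>] t)
      (𝓝 (cf t * ‖xd‖ + cd * ‖x t‖)) :=
    (hcf.mul hqx.norm).add (hqc.mul tendsto_const_nhds)
  have hlt : ∀ᶠ z in 𝓝[>] t, cf z * ‖slope x t z‖ + slope cf t z * ‖x t‖ < r :=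
    hg.eventually_lt_const (by linarith)
  filter_upwards [hlt, self_mem_nhdsWithin] with z hz hz'
  have htz : t < z := hz'
  have hzt0 : (0:ℝ) < z - t := sub_pos.2 htz
  have hslope : slope (fun s => cf s * ‖x s‖) t z
      = (z - t)⁻¹ * (cf z * (‖x z‖ - ‖x t‖)) + slope cf t z * ‖x t‖ := by
    simp only [slope_def_field]
    field_simp
    ring
  have hnorm : ‖x z‖ - ‖x t‖ ≤ (z - t) * ‖slope x t z‖ := by
    have h1 : ‖x z‖ - ‖x t‖ ≤ ‖x z - x t‖ := norm_sub_norm_le _ _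
    have h2 : ‖slope x t z‖ = (z - t)⁻¹ * ‖x z - x t‖ := by
      rw [slope_def_module, norm_smul, Real.norm_eq_abs, abs_inv, abs_of_pos hzt0]
    rw [h2, ← mul_assoc, mul_inv_cancel₀ hzt0.ne', one_mul]
    exact h1
  calc slope (fun s => cf s * ‖x s‖) t z
      = (z - t)⁻¹ * (cf z * (‖x z‖ - ‖x t‖)) + slope cf t z * ‖x t‖ := hslope
    _ ≤ (z - t)⁻¹ * (cf z * ((z - t) * ‖slope x t z‖)) + slope cf t z * ‖x t‖ := by
        have h3 := mul_le_mul_of_nonneg_left hnorm (hc0 z)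
        have h4 := mul_le_mul_of_nonneg_left h3 (inv_nonneg.2 hzt0.le)
        linarith
    _ = cf z * ‖slope x t z‖ + slope cf t z * ‖x t‖ := by
        field_simp
    _ < r := hz

private lemma exp_int_le' {a t : ℝ} (ha : 0 < a) (_ht : 0 ≤ t) :
    ∫ s in (0:ℝ)..t, Real.exp (-a*s) ≤ 1/a := by
  have hder : ∀ s ∈ Set.uIcc (0:ℝ) t,
      HasDerivAt (fun u => -(Real.exp (-a*u)/a)) (Real.exp (-a*s)) s := by
    intro s _
    have h1 : HasDerivAt (fun u : ℝ => -a*u) (-a) s := by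
      simpa using (hasDerivAt_id s).const_mul (-a)
    have h2 := h1.exp
    have h3 : HasDerivAt (fun u => -(Real.exp (-a*u)/a)) _ s := (h2.div_const a).neg
    convert h3 using 1
    field_simp
  rw [intervalIntegral.integral_eq_sub_of_hasDerivAt hder
    ((Real.continuous_exp.comp (continuous_const.mul continuous_id)).intervalIntegrable 0 t)]
  have h1 : 0 < Real.exp (-a*t) := Real.exp_pos _
  have h2 : Real.exp (-a*0) = 1 := by norm_num
  have h3 : 0 < Real.exp (-a*t)/a := div_pos h1 ha
  rw [h2]
  linarith

/-- Variable-coefficient Gronwall inequality (slope form). -/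
private lemma gronwall_var' {v k h : ℝ → ℝ} {T : ℝ}
    (hv : ContinuousOn v (Set.Icc 0 T)) (hk : Continuous k) (hh : Continuous h)
    (hk0 : ∀ s, 0 ≤ k s) (hh0 : ∀ s, 0 ≤ h s)
    (hs : ∀ t ∈ Set.Ico (0:ℝ) T, ∀ r, k t * v t + h t < r →
       ∃ᶠ z in 𝓝[>] t, slope v t z < r) :
    ∀ t ∈ Set.Icc (0:ℝ) T,
      v t ≤ Real.exp (∫ s in (0:ℝ)..t, k s) * (v 0 + ∫ s in (0:ℝ)..t, h s) := by
  intro t htT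
  have h0t : (0:ℝ) ≤ t := htT.1
  set K : ℝ → ℝ := fun u => ∫ s in (0:ℝ)..u, k s with hKdef
  have hK : ∀ u, HasDerivAt K (k u) u := fun u =>
    intervalIntegral.integral_hasDerivAt_right (hk.intervalIntegrable 0 u)
      (hk.stronglyMeasurableAtFilter _ _) hk.continuousAt
  have hKcont : Continuous K := by
    rw [continuous_iff_continuousAt]; exact fun u => (hK u).continuousAt
  have hKnonneg : ∀ s, 0 ≤ s → 0 ≤ K s := fun s hs' =>
    intervalIntegral.integral_nonneg hs' (fun u _ => hk0 u)
  have key : ∀ ε > 0, v t ≤ Real.exp (K t) *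
      (v 0 + ε + ∫ s in (0:ℝ)..t, Real.exp (-(K s)) * (h s + ε)) := by
    intro ε hε
    set B : ℝ → ℝ := fun u => Real.exp (K u) *
      (v 0 + ε + ∫ s in (0:ℝ)..u, Real.exp (-(K s)) * (h s + ε)) with hBdef
    have hintε : Continuous fun s => Real.exp (-(K s)) * (h s + ε) :=
      hKcont.neg.rexp.mul (hh.add continuous_const)
    have hE : ∀ u, HasDerivAt (fun w => ∫ s in (0:ℝ)..w, Real.exp (-(K s)) * (h s + ε))
        (Real.exp (-(K u)) * (h u + ε)) u := fun u =>
      intervalIntegral.integral_hasDerivAt_right (hintε.intervalIntegrable 0 u)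
        (hintε.stronglyMeasurableAtFilter _ _) hintε.continuousAt
    have hBd : ∀ u, HasDerivAt B (k u * B u + (h u + ε)) u := by
      intro u
      have h1 : HasDerivAt (fun w => Real.exp (K w)) (Real.exp (K u) * k u) u := (hK u).exp
      have h2 : HasDerivAt (fun w => Real.exp (K w) * ((v 0 + ε) +
          ∫ s in (0:ℝ)..w, Real.exp (-(K s)) * (h s + ε))) _ u :=
        h1.mul ((hasDerivAt_const u (v 0 + ε)).add (hE u))
      have h3 : Real.exp (K u) * (Real.exp (-(K u)) * (h u + ε)) = h u + ε := by
        rw [← mul_assoc, ← Real.exp_add]; simp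
      convert h2 using 1
      simp only [hBdef, zero_add]
      rw [h3]
      ring
    have hres := image_le_of_liminf_slope_right_lt_deriv_boundary
      (f := v) (f' := fun u => k u * v u + h u) hv hs
      (B := B) (B' := fun u => k u * B u + (h u + ε))
      (by
        have hK00 : K 0 = 0 := intervalIntegral.integral_same
        have hB0 : B 0 = v 0 + ε := by
          simp only [hBdef, hK00, Real.exp_zero, one_mul, intervalIntegral.integral_same,
            add_zero]
        rw [hB0]; linarith)
      hBd
      (fun u _ hvB => by rw [hvB]; linarith)
    exact hres htT
  set c : ℝ := Real.exp (K t) * (1 + t) with hc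
  have hcpos : 0 < c := by positivity
  refine le_of_forall_pos_le_add fun ε' hε' => ?_
  have hεc : 0 < ε' / c := by positivity
  have hbound := key (ε'/c) hεc
  have hmono : (∫ s in (0:ℝ)..t, Real.exp (-(K s)) * (h s + ε'/c))
      ≤ (∫ s in (0:ℝ)..t, h s) + (ε'/c) * t := by
    have h1 : (∫ s in (0:ℝ)..t, Real.exp (-(K s)) * (h s + ε'/c))
        ≤ ∫ s in (0:ℝ)..t, (h s + ε'/c) := by
      apply intervalIntegral.integral_mono_on h0t
        ((hKcont.neg.rexp.mul (hh.add continuous_const)).intervalIntegrable 0 t)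
        ((hh.add continuous_const).intervalIntegrable 0 t)
      intro s hs'
      have hK0 : 0 ≤ K s := hKnonneg s hs'.1
      have he1 : Real.exp (-(K s)) ≤ 1 := by
        rw [Real.exp_le_one_iff]; linarith
      have hpos : 0 ≤ h s + ε'/c := by linarith [hh0 s]
      calc Real.exp (-(K s)) * (h s + ε'/c) ≤ 1 * (h s + ε'/c) :=
            mul_le_mul_of_nonneg_right he1 hpos
        _ = h s + ε'/c := one_mul _
    have h2 : (∫ s in (0:ℝ)..t, (h s + ε'/c)) = (∫ s in (0:ℝ)..t, h s) + (ε'/c) * t := by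
      rw [intervalIntegral.integral_add (hh.intervalIntegrable 0 t)
        (intervalIntegrable_const)]
      simp
      ring
    linarith
  have hexp : (0:ℝ) < Real.exp (K t) := Real.exp_pos _
  have hfinal : v t ≤ Real.exp (K t) * (v 0 + ∫ s in (0:ℝ)..t, h s) + (ε'/c) * c := by
    have h5 := mul_le_mul_of_nonneg_left (by linarith [hmono] :
      v 0 + ε'/c + (∫ s in (0:ℝ)..t, Real.exp (-(K s)) * (h s + ε'/c))
        ≤ v 0 + (∫ s in (0:ℝ)..t, h s) + (ε'/c) * (1 + t)) hexp.le
    calc v t ≤ Real.exp (K t) * (v 0 + ε'/c + ∫ s in (0:ℝ)..t,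
          Real.exp (-(K s)) * (h s + ε'/c)) := hbound
      _ ≤ Real.exp (K t) * (v 0 + (∫ s in (0:ℝ)..t, h s) + (ε'/c) * (1 + t)) := h5
      _ = Real.exp (K t) * (v 0 + ∫ s in (0:ℝ)..t, h s) + (ε'/c) * c := by rw [hc]; ring
  rw [div_mul_cancel₀ ε' hcpos.ne'] at hfinal
  exact hfinal

private lemma contOn_intInt' {F : ℝ → ℝ} {T u t : ℝ} (hF : ContinuousOn F (Set.Icc 0 T))
    (h0u : 0 ≤ u) (hut : u ≤ t) (htT : t ≤ T) :
    IntervalIntegrable F MeasureTheory.volume u t := by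
  apply ContinuousOn.intervalIntegrable
  rw [Set.uIcc_of_le hut]
  exact hF.mono (Set.Icc_subset_Icc h0u htT)

private lemma int_mono_nonneg' {F : ℝ → ℝ} {T u t : ℝ} (hF : ContinuousOn F (Set.Icc 0 T))
    (hF0 : ∀ w ∈ Set.Icc (0:ℝ) T, 0 ≤ F w) (h0u : 0 ≤ u) (hut : u ≤ t) (htT : t ≤ T) :
    ∫ w in (0:ℝ)..u, F w ≤ ∫ w in (0:ℝ)..t, F w := by
  have hi1 : IntervalIntegrable F MeasureTheory.volume 0 u :=
    contOn_intInt' hF le_rfl h0u (hut.trans htT)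
  have hi2 : IntervalIntegrable F MeasureTheory.volume u t :=
    contOn_intInt' hF h0u hut htT
  have hsplit := intervalIntegral.integral_add_adjacent_intervals hi1 hi2
  have hpos : 0 ≤ ∫ w in u..t, F w :=
    intervalIntegral.integral_nonneg hut (fun w hw =>
      hF0 w ⟨h0u.trans hw.1, hw.2.trans htT⟩)
  linarith



universe u v

set_option maxHeartbeats 1000000 in
/-- Gronwall-type inequality (upper bounds): if `‖x′‖ ≲ δe^{−αt}‖x‖ + δ‖y‖ + f` and
`‖y′‖ ≲ δe^{−βt}‖x‖ + δe^{−γt}‖y‖ + g` on `[0,T]`, then `x` grows at most linearly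
(in terms of the data) and `y` stays bounded, with a constant depending only on
`α, β, γ, C₀`. -/
theorem stmt14 (α β γ C₀ : ℝ) (hα : 0 < α) (hβ : 0 < β) (hγ : 0 < γ) (hC₀ : 0 < C₀) :
    ∃ C : ℝ, 0 < C ∧
      ∀ (δ T : ℝ), 0 < δ → δ < 1 → 0 < T →
      ∀ (E₁ : Type u) (E₂ : Type v)
        [NormedAddCommGroup E₁] [NormedSpace ℝ E₁]
        [NormedAddCommGroup E₂] [NormedSpace ℝ E₂],
      ∀ (x x' : ℝ → E₁) (y y' : ℝ → E₂) (f g : ℝ → ℝ),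
        ContinuousOn f (Set.Icc 0 T) → ContinuousOn g (Set.Icc 0 T) →
        (∀ t ∈ Set.Icc (0:ℝ) T, 0 ≤ f t) → (∀ t ∈ Set.Icc (0:ℝ) T, 0 ≤ g t) →
        (∀ t ∈ Set.Icc (0:ℝ) T, HasDerivWithinAt x (x' t) (Set.Icc 0 T) t) →
        (∀ t ∈ Set.Icc (0:ℝ) T, HasDerivWithinAt y (y' t) (Set.Icc 0 T) t) →
        (∀ t ∈ Set.Icc (0:ℝ) T,
          ‖x' t‖ ≤ C₀ * (δ * Real.exp (-α * t) * ‖x t‖ + δ * ‖y t‖ + f t)) →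
        (∀ t ∈ Set.Icc (0:ℝ) T,
          ‖y' t‖ ≤ C₀ * (δ * Real.exp (-β * t) * ‖x t‖ +
            δ * Real.exp (-γ * t) * ‖y t‖ + g t)) →
        ∀ t ∈ Set.Icc (0:ℝ) T,
          ‖x t‖ ≤ C * ((1 + t) * ‖x 0‖ + t * ‖y 0‖ +
            ∫ s in (0:ℝ)..t, ((1 + t * Real.exp (-β * s)) * f s + t * g s)) ∧
          ‖y t‖ ≤ C * (‖x 0‖ + ‖y 0‖ +
            ∫ s in (0:ℝ)..t, (Real.exp (-β * s) * f s + g s)) := by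
  obtain ⟨lam, hlamdef⟩ : ∃ lam : ℝ, lam = C₀/β := ⟨_, rfl⟩
  have hlam : 0 < lam := hlamdef ▸ div_pos hC₀ hβ
  have hlb : lam * β = C₀ := by rw [hlamdef]; field_simp
  obtain ⟨L, hLdef⟩ : ∃ L : ℝ, L = C₀*(1+lam)*(1/α+1/β+1/γ) := ⟨_, rfl⟩
  have hL : 0 < L := by rw [hLdef]; positivity
  obtain ⟨eL, heLdef⟩ : ∃ eL : ℝ, eL = Real.exp L := ⟨_, rfl⟩
  have heL : 1 ≤ eL := by rw [heLdef]; exact Real.one_le_exp hL.le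
  have heL0 : 0 < eL := by linarith
  obtain ⟨c₁, hc₁def⟩ : ∃ c₁ : ℝ, c₁ = eL * (1+lam) * (1+C₀) := ⟨_, rfl⟩
  have hc₁ : 0 < c₁ := by rw [hc₁def]; positivity
  obtain ⟨eA, heAdef⟩ : ∃ eA : ℝ, eA = Real.exp (C₀/α) := ⟨_, rfl⟩
  have heA : 1 ≤ eA := by rw [heAdef]; exact Real.one_le_exp (by positivity)
  have heA0 : 0 < eA := by linarith
  obtain ⟨C, hCdef⟩ : ∃ C : ℝ, C = c₁ + eA * (1 + C₀*c₁ + C₀) := ⟨_, rfl⟩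
  have heACpos : 0 < eA * (1 + C₀*c₁ + C₀) :=
    mul_pos heA0 (by nlinarith)
  have hCpos : 0 < C := by rw [hCdef]; nlinarith
  have hc₁C : c₁ ≤ C := by rw [hCdef]; linarith
  have hcoef1 : eA ≤ C := by rw [hCdef]; nlinarith [mul_pos heA0 hC₀, mul_pos (mul_pos heA0 hC₀) hc₁]
  have hcoef2 : eA*C₀*c₁ ≤ C := by rw [hCdef]; nlinarith [mul_pos heA0 hC₀, mul_pos (mul_pos heA0 hC₀) hc₁]
  have hcoef3 : eA*C₀ ≤ C := by rw [hCdef]; nlinarith [mul_pos heA0 hC₀, mul_pos (mul_pos heA0 hC₀) hc₁]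
  have ha1 : lam ≤ (1+lam)*(1+C₀) := by nlinarith
  have ha2 : (1:ℝ) ≤ (1+lam)*(1+C₀) := by nlinarith
  have ha3 : lam*C₀ ≤ (1+lam)*(1+C₀) := by nlinarith
  have ha4 : C₀ ≤ (1+lam)*(1+C₀) := by nlinarith
  refine ⟨C, hCpos, ?_⟩
  intro δ T hδ hδ1 hT E₁ E₂ _ _ _ _ x x' y y' f g hfc hgc hf0 hg0 hx hy hx' hy'
  have h0T : (0:ℝ) ≤ T := hT.le
  have hceα : Continuous (fun u : ℝ => Real.exp (-α*u)) :=
    (continuous_const.mul continuous_id).rexp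
  have hceβ : Continuous (fun u : ℝ => Real.exp (-β*u)) :=
    (continuous_const.mul continuous_id).rexp
  have hceγ : Continuous (fun u : ℝ => Real.exp (-γ*u)) :=
    (continuous_const.mul continuous_id).rexp
  -- clamped extensions of f, g, ‖y‖ to all of ℝ
  set cl : ℝ → ℝ := fun u => max 0 (min u T) with hcldef
  have hclcont : Continuous cl := continuous_const.max (continuous_id.min continuous_const)
  have hclmem : ∀ u, cl u ∈ Set.Icc (0:ℝ) T :=
    fun u => ⟨le_max_left _ _, max_le h0T (min_le_right _ _)⟩
  have hcleq : ∀ u ∈ Set.Icc (0:ℝ) T, cl u = u := fun u hu => by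
    simp only [hcldef]; rw [min_eq_left hu.2, max_eq_right hu.1]
  set fe : ℝ → ℝ := fun u => f (cl u) with hfedef
  have hfec : Continuous fe := hfc.comp_continuous hclcont hclmem
  have hfe0 : ∀ u, 0 ≤ fe u := fun u => hf0 _ (hclmem u)
  have hfeeq : ∀ u ∈ Set.Icc (0:ℝ) T, fe u = f u := fun u hu => by
    simp only [hfedef]; rw [hcleq u hu]
  set ge : ℝ → ℝ := fun u => g (cl u) with hgedef
  have hgec : Continuous ge := hgc.comp_continuous hclcont hclmem
  have hge0 : ∀ u, 0 ≤ ge u := fun u => hg0 _ (hclmem u)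
  have hgeeq : ∀ u ∈ Set.Icc (0:ℝ) T, ge u = g u := fun u hu => by
    simp only [hgedef]; rw [hcleq u hu]
  have hxcont : ContinuousOn x (Set.Icc 0 T) := fun s hs => (hx s hs).continuousWithinAt
  have hycont : ContinuousOn y (Set.Icc 0 T) := fun s hs => (hy s hs).continuousWithinAt
  set ye : ℝ → ℝ := fun u => ‖y (cl u)‖ with hyedef
  have hyec : Continuous ye := (hycont.comp_continuous hclcont hclmem).norm
  have hyeeq : ∀ u ∈ Set.Icc (0:ℝ) T, ye u = ‖y u‖ := fun u hu => by
    simp only [hyedef]; rw [hcleq u hu]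
  -- clean derivative bounds (using δ ≤ 1)
  have hx'c : ∀ τ ∈ Set.Icc (0:ℝ) T,
      ‖x' τ‖ ≤ C₀*(Real.exp (-α*τ)*‖x τ‖ + ‖y τ‖ + f τ) := by
    intro τ hτT
    have h1 := hx' τ hτT
    have h2 : 0 ≤ C₀*((1-δ)*(Real.exp (-α*τ)*‖x τ‖ + ‖y τ‖)) :=
      mul_nonneg hC₀.le (mul_nonneg (by linarith)
        (add_nonneg (mul_nonneg (Real.exp_pos _).le (norm_nonneg _)) (norm_nonneg _)))
    nlinarith [h1, h2]
  have hy'c : ∀ τ ∈ Set.Icc (0:ℝ) T,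
      ‖y' τ‖ ≤ C₀*(Real.exp (-β*τ)*‖x τ‖ + Real.exp (-γ*τ)*‖y τ‖ + g τ) := by
    intro τ hτT
    have h1 := hy' τ hτT
    have h2 : 0 ≤ C₀*((1-δ)*(Real.exp (-β*τ)*‖x τ‖ + Real.exp (-γ*τ)*‖y τ‖)) :=
      mul_nonneg hC₀.le (mul_nonneg (by linarith)
        (add_nonneg (mul_nonneg (Real.exp_pos _).le (norm_nonneg _))
          (mul_nonneg (Real.exp_pos _).le (norm_nonneg _))))
    nlinarith [h1, h2]
  -- First Gronwall: combined quantity vv = lam·e^{-βs}‖x s‖ + ‖y s‖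
  set cf : ℝ → ℝ := fun s => lam * Real.exp (-β*s) with hcfdef
  set vv : ℝ → ℝ := fun s => cf s * ‖x s‖ + 1 * ‖y s‖ with hvvdef
  set k₁ : ℝ → ℝ := fun s =>
    C₀*(1+lam)*(Real.exp (-α*s) + Real.exp (-β*s) + Real.exp (-γ*s)) with hk₁def
  set h₁ : ℝ → ℝ := fun s => lam*C₀*(Real.exp (-β*s) * fe s) + C₀ * ge s with hh₁def
  have hcfc : Continuous cf := continuous_const.mul ((continuous_const.mul continuous_id).rexp)
  have hcf0 : ∀ z, 0 ≤ cf z := fun z => by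
    simp only [hcfdef]; exact mul_nonneg hlam.le (Real.exp_pos _).le
  have hk₁c : Continuous k₁ := continuous_const.mul
    ((((continuous_const.mul continuous_id).rexp).add
      ((continuous_const.mul continuous_id).rexp)).add
      ((continuous_const.mul continuous_id).rexp))
  have hk₁0 : ∀ s, 0 ≤ k₁ s := fun s => by
    simp only [hk₁def]
    apply mul_nonneg (mul_nonneg hC₀.le (by linarith)) (by positivity)
  have hh₁c : Continuous h₁ :=
    (continuous_const.mul (((continuous_const.mul continuous_id).rexp).mul hfec)).add
      (continuous_const.mul hgec)
  have hh₁0 : ∀ s, 0 ≤ h₁ s := fun s => by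
    simp only [hh₁def]
    exact add_nonneg (mul_nonneg (mul_nonneg hlam.le hC₀.le)
      (mul_nonneg (Real.exp_pos _).le (hfe0 s))) (mul_nonneg hC₀.le (hge0 s))
  have hvvcont : ContinuousOn vv (Set.Icc 0 T) := by
    simp only [hvvdef]
    exact (hcfc.continuousOn.mul hxcont.norm).add
      (continuous_const.continuousOn.mul hycont.norm)
  have hsv : ∀ τ ∈ Set.Ico (0:ℝ) T, ∀ r, k₁ τ * vv τ + h₁ τ < r →
      ∃ᶠ z in 𝓝[>] τ, slope vv τ z < r := by
    intro τ hτ r hr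
    have hτT : τ ∈ Set.Icc (0:ℝ) T := ⟨hτ.1, hτ.2.le⟩
    have heα : (0:ℝ) < Real.exp (-α*τ) := Real.exp_pos _
    have heβ : (0:ℝ) < Real.exp (-β*τ) := Real.exp_pos _
    have heγ : (0:ℝ) < Real.exp (-γ*τ) := Real.exp_pos _
    have hX : (0:ℝ) ≤ ‖x τ‖ := norm_nonneg _
    have hY : (0:ℝ) ≤ ‖y τ‖ := norm_nonneg _
    have hcfd : HasDerivAt cf (lam * (Real.exp (-β*τ) * (-β))) τ := by
      have h1 : HasDerivAt (fun s : ℝ => -β*s) (-β) τ := by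
        simpa using (hasDerivAt_id τ).const_mul (-β)
      have h2 := h1.exp
      rw [hcfdef]
      exact h2.const_mul lam
    have hkey : lam * (Real.exp (-β*τ) * (-β)) * ‖x τ‖ + cf τ * ‖x' τ‖
        + ((0:ℝ) * ‖y τ‖ + 1 * ‖y' τ‖) ≤ k₁ τ * vv τ + h₁ τ := by
      simp only [hk₁def, hh₁def, hvvdef, hcfdef]
      rw [hfeeq τ hτT, hgeeq τ hτT]
      have hxm := mul_le_mul_of_nonneg_left (hx'c τ hτT) (mul_nonneg hlam.le heβ.le)
      have hym := hy'c τ hτT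
      have hla : 0 ≤ lam * Real.exp (-α*τ) := mul_nonneg hlam.le heα.le
      have hlbb : 0 ≤ lam * Real.exp (-β*τ) := mul_nonneg hlam.le heβ.le
      have hlc : 0 ≤ lam * Real.exp (-γ*τ) := mul_nonneg hlam.le heγ.le
      have hb1 : 0 ≤ lam*C₀*(Real.exp (-β*τ))*‖x τ‖*
          ((1+lam)*(Real.exp (-α*τ)+Real.exp (-β*τ)+Real.exp (-γ*τ)) - Real.exp (-α*τ)) :=
        mul_nonneg (mul_nonneg (mul_nonneg (mul_nonneg hlam.le hC₀.le) heβ.le) hX)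
          (by nlinarith [hla, hlbb, hlc])
      have hb2 : 0 ≤ C₀*‖y τ‖*
          ((1+lam)*(Real.exp (-α*τ)+Real.exp (-β*τ)+Real.exp (-γ*τ))
            - (lam*Real.exp (-β*τ)+Real.exp (-γ*τ))) :=
        mul_nonneg (mul_nonneg hC₀.le hY) (by nlinarith [hla, hlbb, hlc])
      have hcancel : lam*β*(Real.exp (-β*τ))*‖x τ‖ = C₀*(Real.exp (-β*τ))*‖x τ‖ := by
        rw [hlb]
      linarith [hxm, hym, hb1, hb2, hcancel]
    have hgap : (0:ℝ) < (r - (lam * (Real.exp (-β*τ) * (-β)) * ‖x τ‖ + cf τ * ‖x' τ‖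
        + ((0:ℝ) * ‖y τ‖ + 1 * ‖y' τ‖)))/2 := by linarith
    set D₁ : ℝ := lam * (Real.exp (-β*τ) * (-β)) * ‖x τ‖ + cf τ * ‖x' τ‖ with hD₁def
    set D₂ : ℝ := (0:ℝ) * ‖y τ‖ + 1 * ‖y' τ‖ with hD₂def
    set gap : ℝ := (r - (D₁ + D₂))/2 with hgapdef
    have ev₁ : ∀ᶠ z in 𝓝[>] τ, slope (fun s => cf s * ‖x s‖) τ z < D₁ + gap :=
      slope_norm_mul_lt' hτ (hx τ hτT) hcfd hcf0 (by rw [hD₁def]; linarith)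
    have ev₂ : ∀ᶠ z in 𝓝[>] τ, slope (fun s => (1:ℝ) * ‖y s‖) τ z < D₂ + gap := by
      have := slope_norm_mul_lt' (cf := fun _ : ℝ => (1:ℝ)) (cd := 0) hτ (hy τ hτT)
        (hasDerivAt_const τ 1) (fun _ => zero_le_one)
        (r := D₂ + gap) (by rw [hD₂def]; linarith)
      exact this
    refine ((ev₁.and ev₂).frequently).mono ?_
    rintro z ⟨h1, h2⟩
    have hsl : slope vv τ z = slope (fun s => cf s * ‖x s‖) τ z
        + slope (fun s => (1:ℝ) * ‖y s‖) τ z := by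
      simp only [hvvdef, slope_def_field]
      ring
    rw [hsl]
    linarith
  -- Y bound, for all s in [0,T]
  have hYb : ∀ s ∈ Set.Icc (0:ℝ) T, ‖y s‖ ≤ c₁ * (‖x 0‖ + ‖y 0‖ +
      ((∫ u in (0:ℝ)..s, Real.exp (-β*u) * fe u) + ∫ u in (0:ℝ)..s, ge u)) := by
    intro s hsT
    have h0s : (0:ℝ) ≤ s := hsT.1
    have hg1 := gronwall_var' hvvcont hk₁c hh₁c hk₁0 hh₁0 hsv s hsT
    have hi1 : IntervalIntegrable (fun u => Real.exp (-α*u)) volume 0 s :=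
      hceα.intervalIntegrable 0 s
    have hi2 : IntervalIntegrable (fun u => Real.exp (-β*u)) volume 0 s :=
      hceβ.intervalIntegrable 0 s
    have hi3 : IntervalIntegrable (fun u => Real.exp (-γ*u)) volume 0 s :=
      hceγ.intervalIntegrable 0 s
    have hIk : (∫ u in (0:ℝ)..s, k₁ u) ≤ L := by
      simp only [hk₁def]
      rw [intervalIntegral.integral_const_mul,
        intervalIntegral.integral_add (hi1.add hi2) hi3,
        intervalIntegral.integral_add hi1 hi2, hLdef]
      have e1 := exp_int_le' hα h0s
      have e2 := exp_int_le' hβ h0s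
      have e3 := exp_int_le' hγ h0s
      exact mul_le_mul_of_nonneg_left (by linarith)
        (mul_nonneg hC₀.le (by linarith))
    have hv0 : vv 0 = lam * ‖x 0‖ + ‖y 0‖ := by
      simp only [hvvdef, hcfdef]
      norm_num
    have hIh : (∫ u in (0:ℝ)..s, h₁ u) =
        lam*C₀*(∫ u in (0:ℝ)..s, Real.exp (-β*u) * fe u)
          + C₀*(∫ u in (0:ℝ)..s, ge u) := by
      simp only [hh₁def]
      have hiA : IntervalIntegrable (fun u => lam*C₀*(Real.exp (-β*u) * fe u)) volume 0 s :=
        (continuous_const.mul (hceβ.mul hfec)).intervalIntegrable 0 s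
      have hiB : IntervalIntegrable (fun u => C₀ * ge u) volume 0 s :=
        (continuous_const.mul hgec).intervalIntegrable 0 s
      rw [intervalIntegral.integral_add hiA hiB,
        intervalIntegral.integral_const_mul, intervalIntegral.integral_const_mul]
    have hI₁ : 0 ≤ ∫ u in (0:ℝ)..s, Real.exp (-β*u) * fe u :=
      intervalIntegral.integral_nonneg h0s
        (fun u _ => mul_nonneg (Real.exp_pos _).le (hfe0 u))
    have hI₂ : 0 ≤ ∫ u in (0:ℝ)..s, ge u :=
      intervalIntegral.integral_nonneg h0s (fun u _ => hge0 u)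
    have hyv : ‖y s‖ ≤ vv s := by
      simp only [hvvdef]
      have h6 : 0 ≤ cf s * ‖x s‖ := mul_nonneg (hcf0 s) (norm_nonneg _)
      linarith
    have hexpm : Real.exp (∫ u in (0:ℝ)..s, k₁ u) ≤ eL := by
      rw [heLdef]; exact Real.exp_le_exp.2 hIk
    have hvs0 : 0 ≤ vv 0 + ∫ u in (0:ℝ)..s, h₁ u := by
      rw [hv0, hIh]
      have := mul_nonneg hlam.le (norm_nonneg (x 0))
      have := mul_nonneg (mul_nonneg hlam.le hC₀.le) hI₁
      have := mul_nonneg hC₀.le hI₂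
      have := norm_nonneg (y 0)
      linarith
    have hAB : lam * ‖x 0‖ + ‖y 0‖ + (lam*C₀*(∫ u in (0:ℝ)..s, Real.exp (-β*u) * fe u)
        + C₀*(∫ u in (0:ℝ)..s, ge u))
        ≤ (1+lam)*(1+C₀) * (‖x 0‖ + ‖y 0‖ + ((∫ u in (0:ℝ)..s, Real.exp (-β*u) * fe u)
          + ∫ u in (0:ℝ)..s, ge u)) := by
      linarith [mul_le_mul_of_nonneg_right ha1 (norm_nonneg (x 0)),
        mul_le_mul_of_nonneg_right ha2 (norm_nonneg (y 0)),
        mul_le_mul_of_nonneg_right ha3 hI₁,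
        mul_le_mul_of_nonneg_right ha4 hI₂]
    calc ‖y s‖ ≤ vv s := hyv
      _ ≤ Real.exp (∫ u in (0:ℝ)..s, k₁ u) * (vv 0 + ∫ u in (0:ℝ)..s, h₁ u) := hg1
      _ ≤ eL * (vv 0 + ∫ u in (0:ℝ)..s, h₁ u) := mul_le_mul_of_nonneg_right hexpm hvs0
      _ ≤ eL * ((1+lam)*(1+C₀) * (‖x 0‖ + ‖y 0‖ +
          ((∫ u in (0:ℝ)..s, Real.exp (-β*u) * fe u) + ∫ u in (0:ℝ)..s, ge u))) := by
          rw [hv0, hIh]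
          exact mul_le_mul_of_nonneg_left hAB heL0.le
      _ = c₁ * (‖x 0‖ + ‖y 0‖ + ((∫ u in (0:ℝ)..s, Real.exp (-β*u) * fe u)
          + ∫ u in (0:ℝ)..s, ge u)) := by rw [hc₁def]; ring
  -- Second Gronwall: vx = ‖x s‖
  set vx : ℝ → ℝ := fun s => (1:ℝ) * ‖x s‖ with hvxdef
  set k₂ : ℝ → ℝ := fun s => C₀ * Real.exp (-α*s) with hk₂def
  set h₂ : ℝ → ℝ := fun s => C₀ * (ye s + fe s) with hh₂def
  have hvxcont : ContinuousOn vx (Set.Icc 0 T) := by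
    simp only [hvxdef]
    exact continuous_const.continuousOn.mul hxcont.norm
  have hk₂c : Continuous k₂ := continuous_const.mul ((continuous_const.mul continuous_id).rexp)
  have hh₂c : Continuous h₂ := continuous_const.mul (hyec.add hfec)
  have hk₂0 : ∀ s, 0 ≤ k₂ s := fun s => by
    simp only [hk₂def]; exact mul_nonneg hC₀.le (Real.exp_pos _).le
  have hh₂0 : ∀ s, 0 ≤ h₂ s := fun s => by
    simp only [hh₂def]
    exact mul_nonneg hC₀.le (add_nonneg (norm_nonneg _) (hfe0 s))
  have hsx : ∀ τ ∈ Set.Ico (0:ℝ) T, ∀ r, k₂ τ * vx τ + h₂ τ < r →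
      ∃ᶠ z in 𝓝[>] τ, slope vx τ z < r := by
    intro τ hτ r hr
    have hτT : τ ∈ Set.Icc (0:ℝ) T := ⟨hτ.1, hτ.2.le⟩
    have hD : (0:ℝ)*‖x τ‖ + 1*‖x' τ‖ < r := by
      have h1 := hx'c τ hτT
      have h2 : k₂ τ * vx τ + h₂ τ
          = C₀*(Real.exp (-α*τ)*‖x τ‖ + ‖y τ‖ + f τ) := by
        simp only [hk₂def, hh₂def, hvxdef, hyeeq τ hτT, hfeeq τ hτT]
        ring
      rw [h2] at hr
      linarith
    have := slope_norm_mul_lt' (cf := fun _ : ℝ => (1:ℝ)) (cd := 0) hτ (hx τ hτT)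
      (hasDerivAt_const τ 1) (fun _ => zero_le_one) (r := r) (by simpa using hD)
    exact this.frequently
  -- now the conclusion
  intro t htmem
  have h0t : (0:ℝ) ≤ t := htmem.1
  have htT : t ≤ T := htmem.2
  have hI₁nn : 0 ≤ ∫ u in (0:ℝ)..t, Real.exp (-β*u) * fe u :=
    intervalIntegral.integral_nonneg h0t
      (fun u _ => mul_nonneg (Real.exp_pos _).le (hfe0 u))
  have hI₂nn : 0 ≤ ∫ u in (0:ℝ)..t, ge u :=
    intervalIntegral.integral_nonneg h0t (fun u _ => hge0 u)
  have hIfnn : 0 ≤ ∫ u in (0:ℝ)..t, fe u :=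
    intervalIntegral.integral_nonneg h0t (fun u _ => hfe0 u)
  have hMnn : 0 ≤ ‖x 0‖ + ‖y 0‖ + ((∫ u in (0:ℝ)..t, Real.exp (-β*u) * fe u)
      + ∫ u in (0:ℝ)..t, ge u) := by
    have := norm_nonneg (x 0); have := norm_nonneg (y 0); linarith
  -- second conjunct
  have hgoal2 : (∫ s in (0:ℝ)..t, (Real.exp (-β*s) * f s + g s))
      = (∫ u in (0:ℝ)..t, Real.exp (-β*u) * fe u) + ∫ u in (0:ℝ)..t, ge u := by
    have hcg : Set.EqOn (fun s => Real.exp (-β*s) * f s + g s)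
        (fun s => Real.exp (-β*s) * fe s + ge s) (Set.uIcc 0 t) := by
      intro s hs
      have hsT : s ∈ Set.Icc (0:ℝ) T := by
        rw [Set.uIcc_of_le h0t] at hs
        exact ⟨hs.1, hs.2.trans htT⟩
      simp only []
      rw [hfeeq s hsT, hgeeq s hsT]
    have hiA : IntervalIntegrable (fun u => Real.exp (-β*u) * fe u) volume 0 t :=
      (hceβ.mul hfec).intervalIntegrable 0 t
    have hiB : IntervalIntegrable ge volume 0 t := hgec.intervalIntegrable 0 t
    rw [intervalIntegral.integral_congr hcg, intervalIntegral.integral_add hiA hiB]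
  have hsecond : ‖y t‖ ≤ C * (‖x 0‖ + ‖y 0‖ +
      ∫ s in (0:ℝ)..t, (Real.exp (-β*s) * f s + g s)) := by
    rw [hgoal2]
    calc ‖y t‖ ≤ c₁ * (‖x 0‖ + ‖y 0‖ + ((∫ u in (0:ℝ)..t, Real.exp (-β*u) * fe u)
        + ∫ u in (0:ℝ)..t, ge u)) := hYb t htmem
      _ ≤ C * (‖x 0‖ + ‖y 0‖ + ((∫ u in (0:ℝ)..t, Real.exp (-β*u) * fe u)
        + ∫ u in (0:ℝ)..t, ge u)) := mul_le_mul_of_nonneg_right hc₁C hMnn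
  -- first conjunct
  have hgx := gronwall_var' hvxcont hk₂c hh₂c hk₂0 hh₂0 hsx t htmem
  have hIk₂ : (∫ u in (0:ℝ)..t, k₂ u) ≤ C₀/α := by
    simp only [hk₂def]
    rw [intervalIntegral.integral_const_mul]
    calc C₀ * ∫ u in (0:ℝ)..t, Real.exp (-α*u) ≤ C₀ * (1/α) :=
          mul_le_mul_of_nonneg_left (exp_int_le' hα h0t) hC₀.le
      _ = C₀/α := by ring
  have hIh₂ : (∫ u in (0:ℝ)..t, h₂ u)
      = C₀*((∫ u in (0:ℝ)..t, ye u) + ∫ u in (0:ℝ)..t, fe u) := by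
    simp only [hh₂def]
    rw [intervalIntegral.integral_const_mul,
      intervalIntegral.integral_add (hyec.intervalIntegrable 0 t)
        (hfec.intervalIntegrable 0 t)]
  have hyint : (∫ u in (0:ℝ)..t, ye u) ≤ t * (c₁ * (‖x 0‖ + ‖y 0‖ +
      ((∫ u in (0:ℝ)..t, Real.exp (-β*u) * fe u) + ∫ u in (0:ℝ)..t, ge u))) := by
    have hmono : ∀ u ∈ Set.Icc (0:ℝ) t, ye u ≤ c₁ * (‖x 0‖ + ‖y 0‖ +
        ((∫ w in (0:ℝ)..t, Real.exp (-β*w) * fe w) + ∫ w in (0:ℝ)..t, ge w)) := by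
      intro u hu
      have huT : u ∈ Set.Icc (0:ℝ) T := ⟨hu.1, hu.2.trans htT⟩
      have h1 := hYb u huT
      have h2 : (∫ w in (0:ℝ)..u, Real.exp (-β*w) * fe w)
          ≤ ∫ w in (0:ℝ)..t, Real.exp (-β*w) * fe w :=
        int_mono_nonneg' (T := T) ((hceβ.mul hfec).continuousOn)
          (fun w _ => mul_nonneg (Real.exp_pos _).le (hfe0 w)) hu.1 hu.2 htT
      have h3 : (∫ w in (0:ℝ)..u, ge w) ≤ ∫ w in (0:ℝ)..t, ge w :=
        int_mono_nonneg' (T := T) hgec.continuousOn (fun w _ => hge0 w) hu.1 hu.2 htT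
      have h4 : ye u = ‖y u‖ := hyeeq u huT
      rw [h4]
      have h5 : c₁ * (‖x 0‖ + ‖y 0‖ + ((∫ w in (0:ℝ)..u, Real.exp (-β*w) * fe w)
          + ∫ w in (0:ℝ)..u, ge w)) ≤ c₁ * (‖x 0‖ + ‖y 0‖ +
          ((∫ w in (0:ℝ)..t, Real.exp (-β*w) * fe w) + ∫ w in (0:ℝ)..t, ge w)) :=
        mul_le_mul_of_nonneg_left (by linarith) hc₁.le
      linarith
    calc (∫ u in (0:ℝ)..t, ye u) ≤ ∫ u in (0:ℝ)..t, (c₁ * (‖x 0‖ + ‖y 0‖ +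
        ((∫ w in (0:ℝ)..t, Real.exp (-β*w) * fe w) + ∫ w in (0:ℝ)..t, ge w))) :=
          intervalIntegral.integral_mono_on h0t (hyec.intervalIntegrable 0 t)
            intervalIntegrable_const hmono
      _ = t * (c₁ * (‖x 0‖ + ‖y 0‖ + ((∫ w in (0:ℝ)..t, Real.exp (-β*w) * fe w)
          + ∫ w in (0:ℝ)..t, ge w))) := by
          rw [intervalIntegral.integral_const]
          simp [smul_eq_mul]
  have hvx0 : vx 0 = ‖x 0‖ := by simp only [hvxdef]; ring
  have hvxt : vx t = ‖x t‖ := by simp only [hvxdef]; ring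
  have hvxh0 : 0 ≤ vx 0 + ∫ u in (0:ℝ)..t, h₂ u := by
    rw [hvx0, hIh₂]
    have hyenn : 0 ≤ ∫ u in (0:ℝ)..t, ye u :=
      intervalIntegral.integral_nonneg h0t (fun u _ => norm_nonneg _)
    have := mul_nonneg hC₀.le (add_nonneg hyenn hIfnn)
    have := norm_nonneg (x 0)
    linarith
  have hexpm2 : Real.exp (∫ u in (0:ℝ)..t, k₂ u) ≤ eA := by
    rw [heAdef]; exact Real.exp_le_exp.2 hIk₂
  have hXt : ‖x t‖ ≤ eA * (‖x 0‖ + C₀*((t * (c₁ * (‖x 0‖ + ‖y 0‖ +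
      ((∫ u in (0:ℝ)..t, Real.exp (-β*u) * fe u) + ∫ u in (0:ℝ)..t, ge u))))
      + ∫ u in (0:ℝ)..t, fe u)) := by
    calc ‖x t‖ = vx t := hvxt.symm
      _ ≤ Real.exp (∫ u in (0:ℝ)..t, k₂ u) * (vx 0 + ∫ u in (0:ℝ)..t, h₂ u) := hgx
      _ ≤ eA * (vx 0 + ∫ u in (0:ℝ)..t, h₂ u) :=
          mul_le_mul_of_nonneg_right hexpm2 hvxh0
      _ ≤ eA * (‖x 0‖ + C₀*((t * (c₁ * (‖x 0‖ + ‖y 0‖ +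
          ((∫ u in (0:ℝ)..t, Real.exp (-β*u) * fe u) + ∫ u in (0:ℝ)..t, ge u))))
          + ∫ u in (0:ℝ)..t, fe u)) := by
          rw [hvx0, hIh₂]
          apply mul_le_mul_of_nonneg_left _ heA0.le
          have := mul_le_mul_of_nonneg_left
            (add_le_add_right hyint (∫ u in (0:ℝ)..t, fe u)) hC₀.le
          linarith
  have hgoal1 : (∫ s in (0:ℝ)..t, ((1 + t * Real.exp (-β * s)) * f s + t * g s))
      = (∫ u in (0:ℝ)..t, fe u) + (t * (∫ u in (0:ℝ)..t, Real.exp (-β*u) * fe u)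
        + t * ∫ u in (0:ℝ)..t, ge u) := by
    have hcg : Set.EqOn (fun s => (1 + t * Real.exp (-β * s)) * f s + t * g s)
        (fun s => fe s + (t * (Real.exp (-β*s) * fe s) + t * ge s)) (Set.uIcc 0 t) := by
      intro s hs
      have hsT : s ∈ Set.Icc (0:ℝ) T := by
        rw [Set.uIcc_of_le h0t] at hs
        exact ⟨hs.1, hs.2.trans htT⟩
      simp only []
      rw [hfeeq s hsT, hgeeq s hsT]
      ring
    have hiA : IntervalIntegrable fe volume 0 t := hfec.intervalIntegrable 0 t
    have hiB : IntervalIntegrable (fun u => t * (Real.exp (-β*u) * fe u) + t * ge u)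
        volume 0 t :=
      ((continuous_const.mul (hceβ.mul hfec)).add
        (continuous_const.mul hgec)).intervalIntegrable 0 t
    have hiC : IntervalIntegrable (fun u => t * (Real.exp (-β*u) * fe u)) volume 0 t :=
      (continuous_const.mul (hceβ.mul hfec)).intervalIntegrable 0 t
    have hiD : IntervalIntegrable (fun u => t * ge u) volume 0 t :=
      (continuous_const.mul hgec).intervalIntegrable 0 t
    rw [intervalIntegral.integral_congr hcg, intervalIntegral.integral_add hiA hiB,
      intervalIntegral.integral_add hiC hiD,
      intervalIntegral.integral_const_mul, intervalIntegral.integral_const_mul]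
  have hfirst : ‖x t‖ ≤ C * ((1 + t) * ‖x 0‖ + t * ‖y 0‖ +
      ∫ s in (0:ℝ)..t, ((1 + t * Real.exp (-β * s)) * f s + t * g s)) := by
    rw [hgoal1]
    have hX0 : (0:ℝ) ≤ ‖x 0‖ := norm_nonneg _
    have hY0 : (0:ℝ) ≤ ‖y 0‖ := norm_nonneg _
    have p1 : 0 ≤ (C - eA) * ‖x 0‖ := mul_nonneg (by linarith) hX0
    have p2 : 0 ≤ (C - eA*C₀*c₁) * (t * ‖x 0‖) :=
      mul_nonneg (by linarith) (mul_nonneg h0t hX0)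
    have p3 : 0 ≤ (C - eA*C₀*c₁) * (t * ‖y 0‖) :=
      mul_nonneg (by linarith) (mul_nonneg h0t hY0)
    have p4 : 0 ≤ (C - eA*C₀*c₁) * (t * (∫ u in (0:ℝ)..t, Real.exp (-β*u) * fe u)) :=
      mul_nonneg (by linarith) (mul_nonneg h0t hI₁nn)
    have p5 : 0 ≤ (C - eA*C₀*c₁) * (t * (∫ u in (0:ℝ)..t, ge u)) :=
      mul_nonneg (by linarith) (mul_nonneg h0t hI₂nn)
    have p6 : 0 ≤ (C - eA*C₀) * (∫ u in (0:ℝ)..t, fe u) :=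
      mul_nonneg (by linarith) hIfnn
    linarith [hXt, p1, p2, p3, p4, p5, p6]
  exact ⟨hfirst, hsecond⟩
end

section
/- Gronwall-type inequality, lower bound: Let α, β, γ > 0 and C₀ > 0. There exist δ₀ > 0 and a constant C (depending only on α, β, γ, C₀) with the following property. Let 0 < δ ≤ δ₀, T > 0, let E₁, E₂ be normed real vector spaces, and let x : [0,T] → E₁, y : [0,T] → E₂ be differentiable with ‖x′(t)‖ ≤ C₀ ( δ e^{−αt} ‖x(t)‖ + δ ‖y(t)‖ ) and ‖y′(t)‖ ≤ C₀ ( δ e^{−βt} ‖x(t)‖ + δ e^{−γt} ‖y(t)‖ ) for all 0 ≤ t ≤ T. Then ‖y(t)‖ ≥ (1/2) ‖y(0)‖ − C ‖x(0)‖ for all 0 ≤ t ≤ T. -/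
universe u v

/-- Gronwall-type inequality (lower bound): with no forcing terms and `δ` sufficiently
small (depending on `α, β, γ, C₀`), one has `‖y(t)‖ ≥ (1/2)‖y(0)‖ − C‖x(0)‖`. -/
theorem stmt15 (α β γ C₀ : ℝ) (hα : 0 < α) (hβ : 0 < β) (hγ : 0 < γ) (hC₀ : 0 < C₀) :
    ∃ δ₀ C : ℝ, 0 < δ₀ ∧ 0 < C ∧
      ∀ (δ T : ℝ), 0 < δ → δ ≤ δ₀ → 0 < T →
      ∀ (E₁ : Type u) (E₂ : Type v)
        [NormedAddCommGroup E₁] [NormedSpace ℝ E₁]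
        [NormedAddCommGroup E₂] [NormedSpace ℝ E₂],
      ∀ (x x' : ℝ → E₁) (y y' : ℝ → E₂),
        (∀ t ∈ Set.Icc (0:ℝ) T, HasDerivWithinAt x (x' t) (Set.Icc 0 T) t) →
        (∀ t ∈ Set.Icc (0:ℝ) T, HasDerivWithinAt y (y' t) (Set.Icc 0 T) t) →
        (∀ t ∈ Set.Icc (0:ℝ) T,
          ‖x' t‖ ≤ C₀ * (δ * Real.exp (-α * t) * ‖x t‖ + δ * ‖y t‖)) →
        (∀ t ∈ Set.Icc (0:ℝ) T,
          ‖y' t‖ ≤ C₀ * (δ * Real.exp (-β * t) * ‖x t‖ + δ * Real.exp (-γ * t) * ‖y t‖)) →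
        ∀ t ∈ Set.Icc (0:ℝ) T, (1/2 : ℝ) * ‖y 0‖ - C * ‖x 0‖ ≤ ‖y t‖ := by
  have hμ : 0 < min β γ / 2 := by positivity
  set μ := min β γ / 2 with hμdef
  refine ⟨μ / (4 * C₀), 1/2, by positivity, by norm_num, ?_⟩
  intro δ T hδ hδ₀ hT E₁ E₂ _ _ _ _ x x' y y' hx hy hbx hby t ht
  rw [le_div_iff₀ (by positivity)] at hδ₀
  set K := 2 * C₀ * δ with hKdef
  have hK0 : 0 ≤ K := by positivity
  have hKμ : K ≤ μ / 2 := by nlinarith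
  have hKβ : K ≤ β - μ := by
    have h1 := min_le_left β γ
    have h2 := min_le_right β γ
    simp only [hμdef] at hKμ ⊢
    cases le_total β γ with
    | inl h => rw [min_eq_left h] at hKμ ⊢; linarith
    | inr h => rw [min_eq_right h] at hKμ ⊢; linarith
  have hKγ : K ≤ γ - μ := by
    simp only [hμdef] at hKμ ⊢
    cases le_total β γ with
    | inl h => rw [min_eq_left h] at hKμ ⊢; linarith
    | inr h => rw [min_eq_right h] at hKμ ⊢; linarith
  set f : ℝ → E₁ × E₂ := fun s => (x s, y s) with hfdef
  have hfd : ∀ s ∈ Set.Icc (0:ℝ) T, HasDerivWithinAt f (x' s, y' s) (Set.Icc 0 T) s :=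
    fun s hs => (hx s hs).prodMk (hy s hs)
  have hcont : ContinuousOn f (Set.Icc 0 T) := fun s hs => (hfd s hs).continuousWithinAt
  have hfd' : ∀ s ∈ Set.Ico (0:ℝ) T, HasDerivWithinAt f (x' s, y' s) (Set.Ici s) s :=
    fun s hs => (hfd s ⟨hs.1, hs.2.le⟩).mono_of_mem_nhdsWithin
      (Icc_mem_nhdsGE_of_mem hs)
  set M : ℝ := ‖f 0‖ with hMdef
  have hM0 : 0 ≤ M := norm_nonneg _
  have hbf : ∀ s ∈ Set.Ico (0:ℝ) T, ‖(x' s, y' s)‖ ≤ K * ‖f s‖ + 0 := by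
    intro s hs
    have hs' : s ∈ Set.Icc (0:ℝ) T := ⟨hs.1, hs.2.le⟩
    have he1 : Real.exp (-α * s) ≤ 1 := Real.exp_le_one_iff.2 (by nlinarith [hs.1])
    have he2 : Real.exp (-β * s) ≤ 1 := Real.exp_le_one_iff.2 (by nlinarith [hs.1])
    have he3 : Real.exp (-γ * s) ≤ 1 := Real.exp_le_one_iff.2 (by nlinarith [hs.1])
    have hxf : ‖x s‖ ≤ ‖f s‖ := norm_fst_le (x s, y s)
    have hyf : ‖y s‖ ≤ ‖f s‖ := norm_snd_le (x s, y s)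
    rw [Prod.norm_def]
    apply max_le
    · calc ‖x' s‖ ≤ C₀ * (δ * Real.exp (-α * s) * ‖x s‖ + δ * ‖y s‖) := hbx s hs'
        _ ≤ C₀ * (δ * 1 * ‖f s‖ + δ * ‖f s‖) := by
            gcongr
        _ = K * ‖f s‖ + 0 := by rw [hKdef]; ring
    · calc ‖y' s‖ ≤ C₀ * (δ * Real.exp (-β * s) * ‖x s‖ + δ * Real.exp (-γ * s) * ‖y s‖) :=
            hby s hs'
        _ ≤ C₀ * (δ * 1 * ‖f s‖ + δ * 1 * ‖f s‖) := by gcongr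
        _ = K * ‖f s‖ + 0 := by rw [hKdef]; ring
  have hgron := norm_le_gronwallBound_of_norm_deriv_right_le hcont hfd' (le_refl M) hbf
  have hgrow : ∀ s ∈ Set.Icc (0:ℝ) T, ‖f s‖ ≤ M * Real.exp (K * s) := by
    intro s hs
    have := hgron s hs
    rwa [gronwallBound_ε0, sub_zero] at this
  -- second step : bound ‖y t - y 0‖
  set L : ℝ := 2 * C₀ * δ * M with hLdef
  have hL0 : 0 ≤ L := by positivity
  have hgd' : ∀ s ∈ Set.Ico (0:ℝ) T,
      HasDerivWithinAt (fun r => y r - y 0) (y' s) (Set.Ici s) s :=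
    fun s hs => ((hy s ⟨hs.1, hs.2.le⟩).mono_of_mem_nhdsWithin
      (Icc_mem_nhdsGE_of_mem hs)).sub_const _
  have hgcont : ContinuousOn (fun r => y r - y 0) (Set.Icc 0 T) :=
    fun s hs => ((hy s hs).continuousWithinAt).sub continuousWithinAt_const
  have hB : ∀ s : ℝ, HasDerivAt (fun r => L / μ * (1 - Real.exp (-μ * r)))
      (L * Real.exp (-μ * s)) s := by
    intro s
    have h1 : HasDerivAt (fun r : ℝ => -μ * r) (-μ) s := by
      simpa using (hasDerivAt_id s).const_mul (-μ)
    have h2 := (((h1.exp).const_sub 1).const_mul (L / μ))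
    convert h2 using 1
    · rfl
    · rfl
    field_simp [hμ.ne']
  have hbg : ∀ s ∈ Set.Ico (0:ℝ) T, ‖y' s‖ ≤ L * Real.exp (-μ * s) := by
    intro s hs
    have hs' : s ∈ Set.Icc (0:ℝ) T := ⟨hs.1, hs.2.le⟩
    have hgf := hgrow s hs'
    have hxf : ‖x s‖ ≤ M * Real.exp (K * s) := (norm_fst_le (x s, y s)).trans hgf
    have hyf : ‖y s‖ ≤ M * Real.exp (K * s) := (norm_snd_le (x s, y s)).trans hgf
    have hexpβ : Real.exp (-β * s) * Real.exp (K * s) ≤ Real.exp (-μ * s) := by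
      rw [← Real.exp_add]
      apply Real.exp_le_exp.2
      nlinarith [hs.1]
    have hexpγ : Real.exp (-γ * s) * Real.exp (K * s) ≤ Real.exp (-μ * s) := by
      rw [← Real.exp_add]
      apply Real.exp_le_exp.2
      nlinarith [hs.1]
    calc ‖y' s‖ ≤ C₀ * (δ * Real.exp (-β * s) * ‖x s‖ + δ * Real.exp (-γ * s) * ‖y s‖) :=
          hby s hs'
      _ ≤ C₀ * (δ * Real.exp (-β * s) * (M * Real.exp (K * s))
            + δ * Real.exp (-γ * s) * (M * Real.exp (K * s))) := by gcongr
      _ = C₀ * δ * M * (Real.exp (-β * s) * Real.exp (K * s))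
            + C₀ * δ * M * (Real.exp (-γ * s) * Real.exp (K * s)) := by ring
      _ ≤ C₀ * δ * M * Real.exp (-μ * s) + C₀ * δ * M * Real.exp (-μ * s) := by gcongr
      _ = L * Real.exp (-μ * s) := by rw [hLdef]; ring
  have hboundary := image_norm_le_of_norm_deriv_right_le_deriv_boundary hgcont hgd'
    (B := fun r => L / μ * (1 - Real.exp (-μ * r))) (by simp) hB hbg ht
  have hybound : ‖y t - y 0‖ ≤ L / μ := by
    have hexp : 0 ≤ Real.exp (-μ * t) := (Real.exp_pos _).le
    have hLμ : 0 ≤ L / μ := by positivity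
    calc ‖y t - y 0‖ ≤ L / μ * (1 - Real.exp (-μ * t)) := hboundary
      _ ≤ L / μ * 1 := by nlinarith
      _ = L / μ := mul_one _
  have hLμM : L / μ ≤ M / 2 := by
    rw [div_le_div_iff₀ hμ (by norm_num)]
    calc L * 2 = (2 * C₀ * δ) * M * 2 := by rw [hLdef]
      _ ≤ (μ / 2) * M * 2 := by gcongr
      _ = M * μ := by ring
  have hMle : M ≤ ‖x 0‖ + ‖y 0‖ := by
    rw [hMdef, hfdef, Prod.norm_def]
    exact max_le (le_add_of_nonneg_right (norm_nonneg _)) (le_add_of_nonneg_left (norm_nonneg _))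
  have htri : ‖y 0‖ - ‖y t‖ ≤ ‖y t - y 0‖ := by
    rw [norm_sub_rev]
    exact norm_sub_norm_le _ _
  linarith
end
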